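/- arXiv:2110.13970 — 4 statements merged into one kernel-verified Lean document; each statement's English description precedes it below -/
import Mathlib

section
/- Let $N \ge 2$, let $d_1,\dots,d_N, R, k$ be positive integers, and let $\mathcal{X} \in \mathbb{R}^{d_1 \times \cdots \times d_N}$ be a fixed tensor. Let $\mathcal{G}^1 \in \mathbb{R}^{d_1 \times R}$, $\mathcal{G}^n \in \mathbb{R}^{R \times d_n \times R}$ for $1 < n < N$, and $\mathcal{G}^N \in \mathbb{R}^{R \times d_N \times k}$ be random core tensors whose entries are all i.i.d. standard Gaussian $\mathcal{N}(0,1)$. For each $\kappa \in [k]$ define $\mathbf{y}_\kappa = \sum_{i_1,\dots,i_N} (\mathcal{G}^1)_{i_1,:} (\mathcal{G}^2)_{:,i_2,:} \cdots (\mathcal{G}^{N-1})_{:,i_{N-1},:} (\mathcal{G}^N)_{:,i_N,\kappa} \, \mathcal{X}_{i_1,\dots,i_N}$ and let $f(\mathcal{X}) = \frac{1}{\sqrt{R^{N-1}k}} (\mathbf{y}_1, \dots, \mathbf{y}_k) \in \mathbb{R}^k$. Then $\mathbb{E}\,\|f(\mathcal{X})\|_2^2 = \|\mathcal{X}\|_F^2$.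 -/
open MeasureTheory ProbabilityTheory Matrix Finset

noncomputable section

/-- Path-sum contraction of tensor-train/MPO cores `G` at multi-index `i`, with the
two boundary bond indices fixed to `a` and `b`. -/
def ttPath {N : ℕ} (d : Fin N → ℕ) (ρ : Fin (N + 1) → ℕ)
    (G : (n : Fin N) → Fin (ρ n.castSucc) → Fin (d n) → Fin (ρ n.succ) → ℝ)
    (i : (n : Fin N) → Fin (d n)) (a : Fin (ρ 0)) (b : Fin (ρ (Fin.last N))) : ℝ :=
  ∑ r : ((n : Fin (N + 1)) → Fin (ρ n)),
    if r 0 = a ∧ r (Fin.last N) = b then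
      ∏ n : Fin N, G n (r n.castSucc) (i n) (r n.succ)
    else 0

namespace MpoAux
open Real

lemma exp_int : Integrable (fun x : ℝ => Real.exp (-(1/2 : ℝ) * x ^ 2)) :=
  integrable_exp_neg_mul_sq (by norm_num)

lemma xexp_int : Integrable (fun x : ℝ => x * Real.exp (-(1/2 : ℝ) * x ^ 2)) :=
  integrable_mul_exp_neg_mul_sq (by norm_num)

lemma x2exp_int : Integrable (fun x : ℝ => x ^ 2 * Real.exp (-(1/2 : ℝ) * x ^ 2)) := by
  have h := integrable_rpow_mul_exp_neg_mul_sq (b := (1/2 : ℝ)) (by norm_num) (s := 2) (by norm_num)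
  have : (fun x : ℝ => x ^ (2 : ℝ) * Real.exp (-(1/2 : ℝ) * x ^ 2))
      = fun x : ℝ => x ^ 2 * Real.exp (-(1/2 : ℝ) * x ^ 2) := by
    funext x
    rw [show (2 : ℝ) = ((2 : ℕ) : ℝ) by norm_num, Real.rpow_natCast]
  rwa [this] at h

lemma int_x_exp : ∫ x : ℝ, x * Real.exp (-(1/2 : ℝ) * x ^ 2) = 0 := by
  apply integral_eq_zero_of_hasDerivAt_of_integrable
    (f := fun x : ℝ => -Real.exp (-(1/2 : ℝ) * x ^ 2))
  · intro x
    have h1 : HasDerivAt (fun x : ℝ => -(1/2 : ℝ) * x ^ 2) (-(1/2 : ℝ) * ((2 : ℕ) * x ^ 1)) x :=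
      (hasDerivAt_pow 2 x).const_mul _
    have h2 := (h1.exp).fun_neg
    convert h2 using 1
    simp [Real.exp_ne_zero]
    ring
  · exact xexp_int
  · exact exp_int.neg

lemma int_x2_exp : ∫ x : ℝ, x ^ 2 * Real.exp (-(1/2 : ℝ) * x ^ 2)
    = ∫ x : ℝ, Real.exp (-(1/2 : ℝ) * x ^ 2) := by
  have h0 : ∫ x : ℝ, (x ^ 2 * Real.exp (-(1/2 : ℝ) * x ^ 2) - Real.exp (-(1/2 : ℝ) * x ^ 2)) = 0 := by
    apply integral_eq_zero_of_hasDerivAt_of_integrable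
      (f := fun x : ℝ => -x * Real.exp (-(1/2 : ℝ) * x ^ 2))
    · intro x
      have h1 : HasDerivAt (fun x : ℝ => -(1/2 : ℝ) * x ^ 2) (-(1/2 : ℝ) * ((2 : ℕ) * x ^ 1)) x :=
        (hasDerivAt_pow 2 x).const_mul _
      have h2 := ((hasDerivAt_id x).fun_neg).fun_mul h1.exp
      refine h2.congr_deriv ?_
      simp only [id_eq]
      ring
    · exact x2exp_int.sub exp_int
    · refine xexp_int.neg.congr ?_
      filter_upwards with x
      simp only [Pi.neg_apply, neg_mul]
  have := integral_sub x2exp_int exp_int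
  rw [h0] at this
  linarith [this]

end MpoAux

namespace MpoAux
open Real

lemma pdf_eq (x : ℝ) :
    gaussianPDFReal 0 1 x = (Real.sqrt (2 * π))⁻¹ * Real.exp (-(1/2 : ℝ) * x ^ 2) := by
  rw [gaussianPDFReal]
  simp only [NNReal.coe_one, mul_one, sub_zero]
  have h : -x ^ 2 / 2 = -(1/2 : ℝ) * x ^ 2 := by ring
  rw [h]

lemma integral_gauss01 (g : ℝ → ℝ) :
    ∫ x, g x ∂(gaussianReal 0 1) = ∫ x, gaussianPDFReal 0 1 x * g x := by
  rw [gaussianReal_of_var_ne_zero 0 one_ne_zero]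
  have hpdf : gaussianPDF 0 1 = fun x => ((Real.toNNReal (gaussianPDFReal 0 1 x) : NNReal) : ENNReal) := by
    funext x; rfl
  rw [hpdf, integral_withDensity_eq_integral_smul ((measurable_gaussianPDFReal 0 1).real_toNNReal) g]
  congr 1; funext x
  rw [NNReal.smul_def, Real.coe_toNNReal _ (gaussianPDFReal_nonneg 0 1 x), smul_eq_mul]

lemma integrable_gauss01_iff (g : ℝ → ℝ) :
    Integrable g (gaussianReal 0 1) ↔
      Integrable (fun x => g x * gaussianPDFReal 0 1 x) (volume : Measure ℝ) := by
  rw [gaussianReal_of_var_ne_zero 0 one_ne_zero,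
    integrable_withDensity_iff (measurable_gaussianPDF 0 1)
      (Filter.Eventually.of_forall fun x => ENNReal.ofReal_lt_top)]
  constructor <;> intro h <;> refine h.congr (Filter.Eventually.of_forall fun x => ?_) <;>
    simp [gaussianPDF, ENNReal.toReal_ofReal (gaussianPDFReal_nonneg 0 1 x)]

lemma gaussian_moment_int (m : ℕ) (hm : m ≤ 2) :
    Integrable (fun x : ℝ => x ^ m) (gaussianReal 0 1) := by
  interval_cases m
  · simpa using (integrable_const (c := (1:ℝ)) (μ := gaussianReal 0 1))
  · rw [integrable_gauss01_iff]
    have h : (fun x : ℝ => x ^ 1 * gaussianPDFReal 0 1 x)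
        = fun x => (Real.sqrt (2 * π))⁻¹ * (x * Real.exp (-(1/2 : ℝ) * x ^ 2)) := by
      funext x; rw [pdf_eq]; ring
    rw [h]; exact xexp_int.const_mul _
  · rw [integrable_gauss01_iff]
    have h : (fun x : ℝ => x ^ 2 * gaussianPDFReal 0 1 x)
        = fun x => (Real.sqrt (2 * π))⁻¹ * (x ^ 2 * Real.exp (-(1/2 : ℝ) * x ^ 2)) := by
      funext x; rw [pdf_eq]; ring
    rw [h]; exact x2exp_int.const_mul _

lemma gaussian_moment_val (m : ℕ) (hm : m ≤ 2) :
    ∫ x, x ^ m ∂(gaussianReal 0 1) = if m = 1 then 0 else 1 := by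
  interval_cases m
  · simp
  · rw [integral_gauss01]
    have h : (fun x : ℝ => gaussianPDFReal 0 1 x * x ^ 1)
        = fun x => (Real.sqrt (2 * π))⁻¹ * (x * Real.exp (-(1/2 : ℝ) * x ^ 2)) := by
      funext x; rw [pdf_eq]; ring
    rw [show (∫ x, gaussianPDFReal 0 1 x * x ^ 1) = ∫ x, (Real.sqrt (2 * π))⁻¹ * (x * Real.exp (-(1/2 : ℝ) * x ^ 2)) from by rw [h],
      integral_const_mul, int_x_exp]
    simp
  · rw [integral_gauss01]
    have h : (fun x : ℝ => gaussianPDFReal 0 1 x * x ^ 2)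
        = fun x => (Real.sqrt (2 * π))⁻¹ * (x ^ 2 * Real.exp (-(1/2 : ℝ) * x ^ 2)) := by
      funext x; rw [pdf_eq]; ring
    rw [show (∫ x, gaussianPDFReal 0 1 x * x ^ 2) = ∫ x, (Real.sqrt (2 * π))⁻¹ * (x ^ 2 * Real.exp (-(1/2 : ℝ) * x ^ 2)) from by rw [h],
      integral_const_mul, int_x2_exp]
    have hg := integral_gaussian (1/2 : ℝ)
    rw [show (fun x : ℝ => Real.exp (-(1/2 : ℝ) * x ^ 2)) = fun x : ℝ => Real.exp (-(1/2 : ℝ) * x ^ 2) from rfl]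
    rw [hg, show π / (1/2 : ℝ) = 2 * π by ring]
    rw [if_neg (by norm_num)]
    exact inv_mul_cancel₀ (Real.sqrt_ne_zero'.mpr (by positivity))

lemma integral_indep_prod {ι Ω : Type*} [MeasurableSpace Ω] {μ : Measure Ω} [IsProbabilityMeasure μ]
    (h : ι → Ω → ℝ)
    (hindep : iIndepFun h μ)
    (hmeas : ∀ i, Measurable (h i)) (hint : ∀ i, Integrable (h i) μ) (s : Finset ι) :
    Integrable (fun ω => ∏ i ∈ s, h i ω) μ ∧
      (∫ ω, ∏ i ∈ s, h i ω ∂μ) = ∏ i ∈ s, ∫ ω, h i ω ∂μ := by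
  classical
  induction s using Finset.induction_on with
  | empty => simp
  | @insert a s ha ih =>
    have hfun : (fun ω => ∏ i ∈ s, h i ω) = ∏ i ∈ s, h i := by
      funext ω; rw [Finset.prod_apply]
    have hIndep : IndepFun (h a) (fun ω => ∏ i ∈ s, h i ω) μ := by
      rw [hfun]; exact (hindep.indepFun_finsetProd_of_notMem hmeas ha).symm
    have hInt2 := ih.1
    have hmul : Integrable (fun ω => h a ω * ∏ i ∈ s, h i ω) μ :=
      (hIndep.integrable_mul (hint a) hInt2).congr (Filter.Eventually.of_forall fun ω => rfl)
    constructor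
    · refine hmul.congr (Filter.Eventually.of_forall fun ω => ?_)
      show h a ω * ∏ i ∈ s, h i ω = ∏ i ∈ insert a s, h i ω
      rw [Finset.prod_insert ha]
    · have hfe : (fun ω => ∏ i ∈ insert a s, h i ω) = fun ω => h a ω * ∏ i ∈ s, h i ω := by
        funext ω; exact Finset.prod_insert ha
      rw [hfe, Finset.prod_insert ha, ← ih.2]
      exact hIndep.integral_mul_eq_mul_integral (hint a).1 hInt2.1

lemma sum_ite_mul {K : Type*} [Fintype K] [DecidableEq K] (a b : K) (A B : ℝ) :
    ∑ κ : K, (if a = κ then A else 0) * (if b = κ then B else 0)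
      = if a = b then A * B else 0 := by
  have h : ∀ κ : K, (if a = κ then A else 0) * (if b = κ then B else 0)
      = if a = κ then (if b = κ then A * B else 0) else 0 := by
    intro κ; split_ifs <;> ring
  rw [Finset.sum_congr rfl fun κ _ => h κ, Finset.sum_ite_eq]
  simp only [Finset.mem_univ, if_true]
  by_cases hab : a = b
  · subst hab; simp
  · rw [if_neg fun hba => hab hba.symm, if_neg hab]

end MpoAux

namespace MpoAux
open Real

lemma key_aux {Ω ι P : Type*} [MeasurableSpace Ω] {μ : Measure Ω} [IsProbabilityMeasure μ]
    [Fintype ι] [DecidableEq ι] [Fintype P] [DecidableEq P]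
    (Y : P → Ω → ℝ)
    (hmeas : ∀ p, Measurable (Y p))
    (hlaw : ∀ p, Measure.map (Y p) μ = gaussianReal 0 1)
    (hindep : iIndepFun Y μ)
    (p1 p2 : ι → P)
    (h1 : Function.Injective p1) (h2 : Function.Injective p2)
    (hcross : ∀ n n', p1 n = p2 n' → n = n') :
    Integrable (fun ω => (∏ n, Y (p1 n) ω) * ∏ n, Y (p2 n) ω) μ ∧
      (∫ ω, (∏ n, Y (p1 n) ω) * ∏ n, Y (p2 n) ω ∂μ) = if p1 = p2 then 1 else 0 := by
  classical
  set m : P → ℕ := fun p =>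
    (univ.filter fun n => p1 n = p).card + (univ.filter fun n => p2 n = p).card with hm
  have fib : ∀ q : ι → P, ∀ ω, (∏ p : P, Y p ω ^ (univ.filter fun n => q n = p).card)
      = ∏ n, Y (q n) ω := by
    intro q ω
    have step : ∀ p : P, Y p ω ^ (univ.filter fun n => q n = p).card
        = ∏ n ∈ univ.filter fun n => q n = p, Y (q n) ω := by
      intro p
      rw [Finset.prod_congr rfl fun n hn => by rw [(Finset.mem_filter.1 hn).2],
        Finset.prod_const]
    rw [Finset.prod_congr rfl fun p _ => step p]
    exact Finset.prod_fiberwise univ (fun n => q n) fun n => Y (q n) ω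
  have hpt : (fun ω => (∏ n, Y (p1 n) ω) * ∏ n, Y (p2 n) ω)
      = fun ω => ∏ p : P, Y p ω ^ m p := by
    funext ω
    simp only [hm, pow_add, Finset.prod_mul_distrib, fib p1 ω, fib p2 ω]
  have hmeas' : ∀ p, Measurable fun ω => Y p ω ^ m p := fun p => (hmeas p).pow_const _
  have hind : iIndepFun (fun p ω => Y p ω ^ m p) μ :=
    hindep.comp (fun p x => x ^ m p) fun p => measurable_id'.pow_const _
  have hc1 : ∀ p, (univ.filter fun n => p1 n = p).card ≤ 1 := fun p =>
    Finset.card_le_one.2 fun a ha b hb =>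
      h1 ((Finset.mem_filter.1 ha).2.trans (Finset.mem_filter.1 hb).2.symm)
  have hc2 : ∀ p, (univ.filter fun n => p2 n = p).card ≤ 1 := fun p =>
    Finset.card_le_one.2 fun a ha b hb =>
      h2 ((Finset.mem_filter.1 ha).2.trans (Finset.mem_filter.1 hb).2.symm)
  have hm2 : ∀ p, m p ≤ 2 := fun p => by
    have ha := hc1 p; have hb := hc2 p; simp only [hm]; omega
  have hIntp : ∀ p, Integrable (fun ω => Y p ω ^ m p) μ := by
    intro p
    have h := MpoAux.gaussian_moment_int (m p) (hm2 p)
    rw [← hlaw p] at h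
    exact (integrable_map_measure (measurable_id'.pow_const (m p)).aestronglyMeasurable
      (hmeas p).aemeasurable).1 h
  have hValp : ∀ p, (∫ ω, Y p ω ^ m p ∂μ) = if m p = 1 then 0 else 1 := by
    intro p
    have h := MpoAux.gaussian_moment_val (m p) (hm2 p)
    rw [← hlaw p, integral_map (hmeas p).aemeasurable
      (measurable_id'.pow_const (m p)).aestronglyMeasurable] at h
    exact h
  have base := MpoAux.integral_indep_prod _ hind hmeas' hIntp Finset.univ
  rw [hpt]
  refine ⟨base.1, ?_⟩
  rw [base.2, Finset.prod_congr rfl fun p _ => hValp p]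
  by_cases hpq : p1 = p2
  · rw [if_pos hpq]
    refine Finset.prod_eq_one fun p _ => ?_
    have hne : m p ≠ 1 := by subst hpq; simp only [hm]; omega
    rw [if_neg hne]
  · rw [if_neg hpq]
    obtain ⟨n, hn⟩ : ∃ n, p1 n ≠ p2 n := by
      by_contra hcon; push_neg at hcon; exact hpq (funext hcon)
    refine Finset.prod_eq_zero (Finset.mem_univ (p1 n)) ?_
    have hA : (univ.filter fun n' => p1 n' = p1 n) = {n} := by
      ext x
      simp only [Finset.mem_filter, Finset.mem_univ, true_and, Finset.mem_singleton]
      exact ⟨fun hx => h1 hx, fun hx => by rw [hx]⟩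
    have hB : (univ.filter fun n' => p2 n' = p1 n) = ∅ := by
      ext x
      simp only [Finset.mem_filter, Finset.mem_univ, true_and, Finset.notMem_empty, iff_false]
      intro hx
      have hxn := hcross n x hx.symm
      subst hxn
      exact hn hx.symm
    have hone : m (p1 n) = 1 := by simp [hm, hA, hB]
    rw [hone]
    simp

lemma sum_sq_expand {I K RT : Type*} [Fintype I] [Fintype K] [Fintype RT] [DecidableEq K]
    (c : ℝ) (B : I → RT → ℝ) (L : RT → K) :
    (∑ κ : K, (c * ∑ i, ∑ r, (if L r = κ then B i r else 0)) ^ 2)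
      = c ^ 2 * ∑ i, ∑ i', ∑ r, ∑ r',
          (if L r = L r' then (B i r) * (B i' r') else 0) := by
  classical
  calc (∑ κ : K, (c * ∑ i, ∑ r, (if L r = κ then B i r else 0)) ^ 2)
      = ∑ κ : K, c ^ 2 * ((∑ i, ∑ r, (if L r = κ then B i r else 0)) *
          (∑ i, ∑ r, (if L r = κ then B i r else 0))) :=
        Finset.sum_congr rfl fun κ _ => by ring
    _ = c ^ 2 * ∑ κ : K, (∑ i, ∑ r, (if L r = κ then B i r else 0)) *
          (∑ i, ∑ r, (if L r = κ then B i r else 0)) := by rw [Finset.mul_sum]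
    _ = c ^ 2 * ∑ κ : K, ∑ i, ∑ i', ∑ r, ∑ r',
          (if L r = κ then B i r else 0) * (if L r' = κ then B i' r' else 0) := by
        congr 1
        refine Finset.sum_congr rfl fun κ _ => ?_
        rw [Finset.sum_mul_sum]
        exact Finset.sum_congr rfl fun i _ => Finset.sum_congr rfl fun i' _ =>
          Finset.sum_mul_sum _ _ _ _
    _ = c ^ 2 * ∑ i, ∑ i', ∑ r, ∑ r', ∑ κ : K,
          (if L r = κ then B i r else 0) * (if L r' = κ then B i' r' else 0) := by
        congr 1
        rw [Finset.sum_comm]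
        refine Finset.sum_congr rfl fun i _ => ?_
        rw [Finset.sum_comm]
        refine Finset.sum_congr rfl fun i' _ => ?_
        rw [Finset.sum_comm]
        refine Finset.sum_congr rfl fun r _ => ?_
        rw [Finset.sum_comm]
    _ = c ^ 2 * ∑ i, ∑ i', ∑ r, ∑ r',
          (if L r = L r' then (B i r) * (B i' r') else 0) := by
        congr 1
        exact Finset.sum_congr rfl fun i _ => Finset.sum_congr rfl fun i' _ =>
          Finset.sum_congr rfl fun r _ => Finset.sum_congr rfl fun r' _ =>
            MpoAux.sum_ite_mul _ _ _ _

end MpoAux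


set_option maxHeartbeats 2000000 in
/-- Expected isometry of the MPO random projection with output shape `k·1·⋯·1`:
the cores have bond dimensions `1, R, …, R, k`, i.i.d. standard Gaussian entries, and
`𝔼 ‖f(𝒳)‖₂² = ‖𝒳‖_F²`. -/
theorem mpo_rp_expected_isometry
    {Ω : Type} [MeasurableSpace Ω] (μ : Measure Ω) [IsProbabilityMeasure μ]
    (N : ℕ) (hN : 2 ≤ N) (d : Fin N → ℕ) (hd : ∀ n, 0 < d n)
    (R k : ℕ) (hR : 0 < R) (hk : 0 < k)
    (ρ : Fin (N + 1) → ℕ) (hρ0 : ρ 0 = 1) (hρlast : ρ (Fin.last N) = k)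
    (hρmid : ∀ n : Fin (N + 1), n ≠ 0 → n ≠ Fin.last N → ρ n = R)
    (X : ((n : Fin N) → Fin (d n)) → ℝ)
    (G : Ω → (n : Fin N) → Fin (ρ n.castSucc) → Fin (d n) → Fin (ρ n.succ) → ℝ)
    (hGmeas : ∀ n a i b, Measurable (fun ω => G ω n a i b))
    (hGdist : ∀ n a i b, Measure.map (fun ω => G ω n a i b) μ = gaussianReal 0 1)
    (hGindep : iIndepFun
      (fun p : (Σ n : Fin N, Fin (ρ n.castSucc) × Fin (d n) × Fin (ρ n.succ)) =>
        fun ω => G ω p.1 p.2.1 p.2.2.1 p.2.2.2) μ) :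
    ∫ ω, ∑ κ : Fin (ρ (Fin.last N)),
        ((1 / Real.sqrt ((R : ℝ) ^ (N - 1) * k)) *
          (∑ i, X i * ∑ a, ttPath d ρ (G ω) i a κ)) ^ 2 ∂μ
      = ∑ i, (X i) ^ 2 := by
  classical
  have hNpos : 0 < N := by omega
  set c : ℝ := 1 / Real.sqrt ((R : ℝ) ^ (N - 1) * k) with hcdef
  -- Key second-moment computation for a pair of path products.
  have key : ∀ (i i' : (n : Fin N) → Fin (d n)) (r r' : (t : Fin (N + 1)) → Fin (ρ t)),
      Integrable (fun ω => (∏ n : Fin N, G ω n (r n.castSucc) (i n) (r n.succ)) *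
          ∏ n : Fin N, G ω n (r' n.castSucc) (i' n) (r' n.succ)) μ ∧
        (∫ ω, (∏ n : Fin N, G ω n (r n.castSucc) (i n) (r n.succ)) *
          ∏ n : Fin N, G ω n (r' n.castSucc) (i' n) (r' n.succ) ∂μ)
          = if i = i' ∧ r = r' then 1 else 0 := by
    intro i i' r r'
    set p1 : Fin N → (Σ n : Fin N, Fin (ρ n.castSucc) × Fin (d n) × Fin (ρ n.succ)) :=
      fun n => ⟨n, (r n.castSucc, i n, r n.succ)⟩ with hp1
    set p2 : Fin N → (Σ n : Fin N, Fin (ρ n.castSucc) × Fin (d n) × Fin (ρ n.succ)) :=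
      fun n => ⟨n, (r' n.castSucc, i' n, r' n.succ)⟩ with hp2
    have h1 : Function.Injective p1 := fun a b h => congrArg Sigma.fst h
    have h2 : Function.Injective p2 := fun a b h => congrArg Sigma.fst h
    have hcross : ∀ n n', p1 n = p2 n' → n = n' := fun n n' h => congrArg Sigma.fst h
    have hmain := MpoAux.key_aux
      (fun p : (Σ n : Fin N, Fin (ρ n.castSucc) × Fin (d n) × Fin (ρ n.succ)) =>
        fun ω => G ω p.1 p.2.1 p.2.2.1 p.2.2.2)
      (fun p => hGmeas _ _ _ _) (fun p => hGdist _ _ _ _) hGindep p1 p2 h1 h2 hcross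
    have hiff : (p1 = p2) ↔ (i = i' ∧ r = r') := by
      constructor
      · intro h
        have hcomp : ∀ n : Fin N,
            r n.castSucc = r' n.castSucc ∧ i n = i' n ∧ r n.succ = r' n.succ := by
          intro n
          have hn := congrFun h n
          injection hn with hfst hsnd
          simp only [Prod.mk.injEq] at hsnd
          exact hsnd
        refine ⟨funext fun n => (hcomp n).2.1, funext fun t => ?_⟩
        rcases lt_or_ge (t : ℕ) N with ht | ht
        · have hts : t = Fin.castSucc ⟨(t : ℕ), ht⟩ := by ext; simp
          rw [hts]; exact (hcomp _).1
        · have hval : (t : ℕ) = N := by have := t.isLt; omega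
          have hts : t = Fin.succ ⟨N - 1, by omega⟩ := by
            ext; simp [Fin.val_succ, hval]; omega
          rw [hts]; exact (hcomp _).2.2
      · rintro ⟨rfl, rfl⟩; rfl
    exact ⟨hmain.1, hmain.2.trans (if_congr hiff rfl rfl)⟩
  -- Pointwise rewriting of the integrand.
  have hA : ∀ (ω : Ω) (i : (n : Fin N) → Fin (d n)) (κ : Fin (ρ (Fin.last N))),
      (∑ a, ttPath d ρ (G ω) i a κ)
        = ∑ r : (t : Fin (N + 1)) → Fin (ρ t),
            (if r (Fin.last N) = κ then
              ∏ n : Fin N, G ω n (r n.castSucc) (i n) (r n.succ) else 0) := by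
    intro ω i κ
    simp only [ttPath]
    rw [Finset.sum_comm]
    refine Finset.sum_congr rfl fun r _ => ?_
    simp [ite_and, Finset.sum_ite_eq]
  have hpoint : ∀ ω : Ω, (∑ κ : Fin (ρ (Fin.last N)),
        (c * (∑ i, X i * ∑ a, ttPath d ρ (G ω) i a κ)) ^ 2)
      = c ^ 2 * ∑ i, ∑ i', ∑ r : (t : Fin (N + 1)) → Fin (ρ t),
          ∑ r' : (t : Fin (N + 1)) → Fin (ρ t),
          (if r (Fin.last N) = r' (Fin.last N) then
            (X i * ∏ n : Fin N, G ω n (r n.castSucc) (i n) (r n.succ)) *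
            (X i' * ∏ n : Fin N, G ω n (r' n.castSucc) (i' n) (r' n.succ)) else 0) := by
    intro ω
    have h1 : ∀ κ : Fin (ρ (Fin.last N)), (∑ i, X i * ∑ a, ttPath d ρ (G ω) i a κ)
        = ∑ i, ∑ r : (t : Fin (N + 1)) → Fin (ρ t),
            (if r (Fin.last N) = κ then
              X i * ∏ n : Fin N, G ω n (r n.castSucc) (i n) (r n.succ) else 0) := by
      intro κ
      refine Finset.sum_congr rfl fun i _ => ?_
      rw [hA ω i κ, Finset.mul_sum]
      exact Finset.sum_congr rfl fun r _ => by rw [mul_ite, mul_zero]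
    simp only [h1]
    exact MpoAux.sum_sq_expand (I := (n : Fin N) → Fin (d n))
      (K := Fin (ρ (Fin.last N))) (RT := (t : Fin (N + 1)) → Fin (ρ t)) c
      (fun i r => X i * ∏ n : Fin N, G ω n (r n.castSucc) (i n) (r n.succ))
      (fun r => r (Fin.last N))
  -- Integrability and value of each summand.
  have hTint : ∀ (i i' : (n : Fin N) → Fin (d n)) (r r' : (t : Fin (N + 1)) → Fin (ρ t)),
      Integrable (fun ω =>
        (if r (Fin.last N) = r' (Fin.last N) then
          (X i * ∏ n : Fin N, G ω n (r n.castSucc) (i n) (r n.succ)) *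
          (X i' * ∏ n : Fin N, G ω n (r' n.castSucc) (i' n) (r' n.succ)) else 0)) μ := by
    intro i i' r r'
    by_cases hc : r (Fin.last N) = r' (Fin.last N)
    · simp only [if_pos hc]
      have heq : (fun ω => (X i * ∏ n : Fin N, G ω n (r n.castSucc) (i n) (r n.succ)) *
            (X i' * ∏ n : Fin N, G ω n (r' n.castSucc) (i' n) (r' n.succ)))
          = fun ω => (X i * X i') *
            ((∏ n : Fin N, G ω n (r n.castSucc) (i n) (r n.succ)) *
             ∏ n : Fin N, G ω n (r' n.castSucc) (i' n) (r' n.succ)) := by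
        funext ω; ring
      rw [heq]
      exact ((key i i' r r').1).const_mul _
    · simp only [if_neg hc]
      exact integrable_zero _ _ _
  have hTval : ∀ (i i' : (n : Fin N) → Fin (d n)) (r r' : (t : Fin (N + 1)) → Fin (ρ t)),
      (∫ ω, (if r (Fin.last N) = r' (Fin.last N) then
          (X i * ∏ n : Fin N, G ω n (r n.castSucc) (i n) (r n.succ)) *
          (X i' * ∏ n : Fin N, G ω n (r' n.castSucc) (i' n) (r' n.succ)) else 0) ∂μ)
        = if (i = i' ∧ r = r') then X i * X i' else 0 := by
    intro i i' r r'
    by_cases hc : r (Fin.last N) = r' (Fin.last N)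
    · simp only [if_pos hc]
      have heq : (∫ ω, (X i * ∏ n : Fin N, G ω n (r n.castSucc) (i n) (r n.succ)) *
            (X i' * ∏ n : Fin N, G ω n (r' n.castSucc) (i' n) (r' n.succ)) ∂μ)
          = ∫ ω, (X i * X i') *
            ((∏ n : Fin N, G ω n (r n.castSucc) (i n) (r n.succ)) *
             ∏ n : Fin N, G ω n (r' n.castSucc) (i' n) (r' n.succ)) ∂μ :=
        integral_congr_ae (Filter.Eventually.of_forall fun ω => by ring)
      rw [heq, integral_const_mul, (key i i' r r').2]
      split_ifs with hd
      · ring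
      · ring
    · simp only [if_neg hc]
      rw [integral_zero]
      rw [if_neg fun hd => hc (by rw [hd.2])]
  -- Put everything together.
  have hcardRr : ((Fintype.card ((t : Fin (N + 1)) → Fin (ρ t)) : ℕ) : ℝ)
      = (R : ℝ) ^ (N - 1) * k := by
    have h0last : (0 : Fin (N + 1)) ≠ Fin.last N := by
      intro h
      have := congrArg Fin.val h
      simp [Fin.last] at this
      omega
    have hmem : Fin.last N ∈ (univ : Finset (Fin (N + 1))).erase 0 :=
      Finset.mem_erase.2 ⟨Ne.symm h0last, Finset.mem_univ _⟩
    have hprod : (∏ t : Fin (N + 1), ρ t) = R ^ (N - 1) * k := by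
      rw [← Finset.mul_prod_erase univ ρ (Finset.mem_univ (0 : Fin (N + 1))),
        ← Finset.mul_prod_erase _ ρ hmem, hρ0, hρlast, one_mul]
      have hcongr : (∏ t ∈ ((univ : Finset (Fin (N + 1))).erase 0).erase (Fin.last N), ρ t)
          = R ^ (N - 1) := by
        rw [Finset.prod_congr rfl fun t ht => hρmid t
          (Finset.mem_erase.1 (Finset.mem_erase.1 ht).2).1 (Finset.mem_erase.1 ht).1,
          Finset.prod_const]
        congr 1
        rw [Finset.card_erase_of_mem hmem, Finset.card_erase_of_mem (Finset.mem_univ _),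
          Finset.card_univ, Fintype.card_fin]
        omega
      rw [hcongr]; ring
    rw [Fintype.card_pi]
    simp only [Fintype.card_fin]
    rw [hprod]
    push_cast
    ring
  have hx : (0 : ℝ) < (R : ℝ) ^ (N - 1) * k :=
    mul_pos (pow_pos (by exact_mod_cast hR) _) (by exact_mod_cast hk)
  calc (∫ ω, ∑ κ : Fin (ρ (Fin.last N)),
        (c * (∑ i, X i * ∑ a, ttPath d ρ (G ω) i a κ)) ^ 2 ∂μ)
      = ∫ ω, c ^ 2 * ∑ i, ∑ i', ∑ r : (t : Fin (N + 1)) → Fin (ρ t),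
          ∑ r' : (t : Fin (N + 1)) → Fin (ρ t),
          (if r (Fin.last N) = r' (Fin.last N) then
            (X i * ∏ n : Fin N, G ω n (r n.castSucc) (i n) (r n.succ)) *
            (X i' * ∏ n : Fin N, G ω n (r' n.castSucc) (i' n) (r' n.succ)) else 0) ∂μ :=
        integral_congr_ae (Filter.Eventually.of_forall hpoint)
    _ = c ^ 2 * ∫ ω, ∑ i, ∑ i', ∑ r : (t : Fin (N + 1)) → Fin (ρ t),
          ∑ r' : (t : Fin (N + 1)) → Fin (ρ t),
          (if r (Fin.last N) = r' (Fin.last N) then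
            (X i * ∏ n : Fin N, G ω n (r n.castSucc) (i n) (r n.succ)) *
            (X i' * ∏ n : Fin N, G ω n (r' n.castSucc) (i' n) (r' n.succ)) else 0) ∂μ :=
        integral_const_mul _ _
    _ = c ^ 2 * ∑ i, ∑ i', ∑ r : (t : Fin (N + 1)) → Fin (ρ t),
          ∑ r' : (t : Fin (N + 1)) → Fin (ρ t),
          (if (i = i' ∧ r = r') then X i * X i' else 0) := by
        congr 1
        rw [integral_finset_sum _ fun i _ => integrable_finset_sum _ fun i' _ =>
          integrable_finset_sum _ fun r _ => integrable_finset_sum _ fun r' _ =>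
          hTint i i' r r']
        refine Finset.sum_congr rfl fun i _ => ?_
        rw [integral_finset_sum _ fun i' _ => integrable_finset_sum _ fun r _ =>
          integrable_finset_sum _ fun r' _ => hTint i i' r r']
        refine Finset.sum_congr rfl fun i' _ => ?_
        rw [integral_finset_sum _ fun r _ => integrable_finset_sum _ fun r' _ =>
          hTint i i' r r']
        refine Finset.sum_congr rfl fun r _ => ?_
        rw [integral_finset_sum _ fun r' _ => hTint i i' r r']
        exact Finset.sum_congr rfl fun r' _ => hTval i i' r r'
    _ = c ^ 2 * ∑ i, ((Fintype.card ((t : Fin (N + 1)) → Fin (ρ t)) : ℕ) : ℝ) * X i ^ 2 := by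
        congr 1
        refine Finset.sum_congr rfl fun i _ => ?_
        rw [Finset.sum_eq_single i]
        · simp [Finset.sum_ite_eq, Finset.sum_const, Finset.card_univ, nsmul_eq_mul, pow_two]
        · intro i' _ hne
          refine Finset.sum_eq_zero fun r _ => Finset.sum_eq_zero fun r' _ => ?_
          rw [if_neg]
          rintro ⟨hh, -⟩
          exact hne hh.symm
        · intro h
          exact absurd (Finset.mem_univ i) h
    _ = ∑ i, X i ^ 2 := by
        rw [← Finset.mul_sum, hcardRr, hcdef, div_pow, one_pow, Real.sq_sqrt hx.le,
          ← mul_assoc, one_div, inv_mul_cancel₀ hx.ne', one_mul]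

end
end

section
/- Let $\mathbf{A} \in \mathbb{R}^{d \times R}$ be a random matrix whose entries are i.i.d. Rademacher random variables, and let $\mathbf{B} \in \mathbb{R}^{p \times d}$ be a random matrix independent of $\mathbf{A}$ with $\mathbb{E}\|\mathbf{B}\|_F^4 < \infty$. Then, writing $\mathbf{M} = \mathbf{B}^\mathsf{T}\mathbf{B}$, $\mathbb{E}\,\|\mathbf{B}\mathbf{A}\|_F^4 = R^2\, \mathbb{E}\big[\mathrm{tr}(\mathbf{M})^2\big] + 2R\, \mathbb{E}\big[\mathrm{tr}(\mathbf{M}^2)\big] - 2R\, \mathbb{E}\Big[\sum_{i=1}^{d} \mathbf{M}_{ii}^2\Big]$. -/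
open MeasureTheory ProbabilityTheory Matrix Finset

noncomputable section

/-- The Rademacher distribution on `ℝ`: uniform on `{1, -1}`. -/
def radDist : Measure ℝ :=
  (2⁻¹ : ENNReal) • Measure.dirac (1 : ℝ) + (2⁻¹ : ENNReal) • Measure.dirac (-1 : ℝ)


lemma radDist_integral_pow (n : ℕ) : ∫ x, x ^ n ∂radDist = if Even n then 1 else 0 := by
  have hi : ∀ a : ℝ, Integrable (fun x : ℝ => x ^ n)
      ((2⁻¹ : ENNReal) • Measure.dirac a) := fun a =>
    ((integrable_const (a ^ n)).congr (ae_eq_dirac (fun x : ℝ => x ^ n)).symm).smul_measure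
      (by norm_num)
  rw [radDist, integral_add_measure (hi 1) (hi (-1)), integral_smul_measure,
    integral_smul_measure, integral_dirac, integral_dirac]
  rcases Nat.even_or_odd n with h | h
  · simp [h, h.neg_one_pow]; norm_num
  · simp [h.neg_one_pow, Nat.not_even_iff_odd.mpr h]

lemma rad_compl : radDist ({1, -1} : Set ℝ)ᶜ = 0 := by
  have hm : MeasurableSet (({1, -1} : Set ℝ)ᶜ) :=
    (by measurability : MeasurableSet ({1, -1} : Set ℝ)).compl
  simp [radDist, Measure.dirac_apply' _ hm]


lemma integral_prod_pow {Ω ι : Type*} [MeasurableSpace Ω] {μ : Measure Ω}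
    [IsProbabilityMeasure μ] {X : ι → Ω → ℝ} (hmeas : ∀ i, Measurable (X i))
    (hind : iIndepFun X μ) (m : ι → ℕ) (s : Finset ι) :
    ∫ ω, ∏ i ∈ s, X i ω ^ m i ∂μ = ∏ i ∈ s, ∫ ω, X i ω ^ m i ∂μ := by
  classical
  have hY : iIndepFun (fun i ω => X i ω ^ m i) μ :=
    hind.comp (fun i x => x ^ m i) (fun i => measurable_id.pow_const (m i))
  have hYm : ∀ i, Measurable (fun ω => X i ω ^ m i) :=
    fun i => (hmeas i).pow_const (m i)
  induction s using Finset.induction_on with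
  | empty => simp
  | @insert a t ha ih =>
    set P : Ω → ℝ := fun ω => ∏ j ∈ t, X j ω ^ m j with hPdef
    have hP : (∏ j ∈ t, fun ω => X j ω ^ m j) = P := by
      funext ω; simp [Finset.prod_apply, hPdef]
    have hIndep : IndepFun P (fun ω => X a ω ^ m a) μ := by
      rw [← hP]; exact hY.indepFun_finsetProd_of_notMem hYm ha
    have hPm : Measurable P := Finset.measurable_prod _ (fun i _ => hYm i)
    have heq : (fun ω => ∏ i ∈ insert a t, X i ω ^ m i) = (P * fun ω => X a ω ^ m a) := by
      funext ω
      simp [Finset.prod_insert ha, hPdef, mul_comm]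
    calc ∫ ω, ∏ i ∈ insert a t, X i ω ^ m i ∂μ
        = ∫ ω, (P * fun ω => X a ω ^ m a) ω ∂μ := by rw [heq]
      _ = (∫ ω, P ω ∂μ) * ∫ ω, X a ω ^ m a ∂μ :=
          IndepFun.integral_mul_eq_mul_integral hIndep hPm.aestronglyMeasurable
            (hYm a).aestronglyMeasurable
      _ = ∏ i ∈ insert a t, ∫ ω, X i ω ^ m i ∂μ := by
          rw [Finset.prod_insert ha, hPdef, ih]; ring

lemma even_count_iff {ι : Type*} [DecidableEq ι] (q1 q2 q3 q4 : ι) :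
    (∀ q, Even ((if q1 = q then 1 else 0) + (if q2 = q then 1 else 0)
      + (if q3 = q then 1 else 0) + (if q4 = q then 1 else 0) : ℕ))
    ↔ (q1 = q2 ∧ q3 = q4) ∨ (q1 = q3 ∧ q2 = q4) ∨ (q1 = q4 ∧ q2 = q3) := by
  constructor
  · intro h
    have h1 := h q1; have h2 := h q2; have h3 := h q3; have h4 := h q4
    by_cases e12 : q1 = q2 <;> by_cases e13 : q1 = q3 <;> by_cases e14 : q1 = q4 <;>
      by_cases e23 : q2 = q3 <;> by_cases e24 : q2 = q4 <;> by_cases e34 : q3 = q4 <;>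
      simp_all [Nat.even_iff] <;> omega
  · rintro (⟨rfl, rfl⟩ | ⟨rfl, rfl⟩ | ⟨rfl, rfl⟩) q
    · exact ⟨(if q1 = q then 1 else 0) + (if q3 = q then 1 else 0), by ring⟩
    · exact ⟨(if q1 = q then 1 else 0) + (if q2 = q then 1 else 0), by ring⟩
    · exact ⟨(if q1 = q then 1 else 0) + (if q2 = q then 1 else 0), by ring⟩

lemma rad_pow_moment {Ω : Type*} [MeasurableSpace Ω] {μ : Measure Ω} [IsProbabilityMeasure μ] {X : Ω → ℝ} (hm : Measurable X)
    (hd : Measure.map X μ = radDist) (n : ℕ) :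
    ∫ ω, X ω ^ n ∂μ = if Even n then 1 else 0 := by
  rw [← radDist_integral_pow n, ← hd,
    integral_map hm.aemeasurable (by measurability)]

lemma rad_four {Ω ι : Type*} [MeasurableSpace Ω] {μ : Measure Ω} [IsProbabilityMeasure μ]
    [Fintype ι] [DecidableEq ι] {X : ι → Ω → ℝ}
    (hmeas : ∀ i, Measurable (X i))
    (hd : ∀ i, Measure.map (X i) μ = radDist)
    (hind : iIndepFun X μ) (q1 q2 q3 q4 : ι) :
    ∫ ω, X q1 ω * X q2 ω * X q3 ω * X q4 ω ∂μ
      = if (q1 = q2 ∧ q3 = q4) ∨ (q1 = q3 ∧ q2 = q4) ∨ (q1 = q4 ∧ q2 = q3)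
        then 1 else 0 := by
  set c : ι → ℕ := fun q => (if q1 = q then 1 else 0) + (if q2 = q then 1 else 0)
      + (if q3 = q then 1 else 0) + (if q4 = q then 1 else 0) with hc
  have hrep : ∀ ω, X q1 ω * X q2 ω * X q3 ω * X q4 ω = ∏ q, X q ω ^ c q := by
    intro ω
    have h : ∀ q' : ι, ∏ q, X q ω ^ (if q' = q then 1 else 0) = X q' ω := by
      intro q'
      have : ∀ q : ι, X q ω ^ (if q' = q then 1 else 0)
          = if q' = q then X q ω else 1 := by
        intro q; split <;> simp
      simp_rw [this]
      simp [Finset.prod_ite_eq]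
    calc X q1 ω * X q2 ω * X q3 ω * X q4 ω
        = (∏ q, X q ω ^ (if q1 = q then 1 else 0)) * (∏ q, X q ω ^ (if q2 = q then 1 else 0))
          * (∏ q, X q ω ^ (if q3 = q then 1 else 0))
          * (∏ q, X q ω ^ (if q4 = q then 1 else 0)) := by rw [h q1, h q2, h q3, h q4]
      _ = ∏ q, X q ω ^ c q := by
          rw [← Finset.prod_mul_distrib, ← Finset.prod_mul_distrib,
            ← Finset.prod_mul_distrib]
          exact Finset.prod_congr rfl fun q _ => by rw [hc]; ring
  calc ∫ ω, X q1 ω * X q2 ω * X q3 ω * X q4 ω ∂μ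
      = ∫ ω, ∏ q, X q ω ^ c q ∂μ := by simp_rw [hrep]
    _ = ∏ q, ∫ ω, X q ω ^ c q ∂μ := integral_prod_pow hmeas hind c univ
    _ = ∏ q : ι, (if Even (c q) then (1:ℝ) else 0) :=
        Finset.prod_congr rfl fun q _ => rad_pow_moment (hmeas q) (hd q) (c q)
    _ = if ∀ q ∈ (univ : Finset ι), Even (c q) then 1 else 0 := by rw [Finset.prod_boole]; convert rfl
    _ = _ := by
        have h : (∀ q ∈ (univ : Finset ι), Even (c q))
            ↔ (q1 = q2 ∧ q3 = q4) ∨ (q1 = q3 ∧ q2 = q4) ∨ (q1 = q4 ∧ q2 = q3) := by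
          simp only [Finset.mem_univ, true_implies]
          exact even_count_iff q1 q2 q3 q4
        rw [if_congr h rfl rfl]

lemma ite_pair_split {α : Type*} [DecidableEq α] (i j k l : α) :
    (if (i = j ∧ k = l) ∨ (i = k ∧ j = l) ∨ (i = l ∧ j = k) then (1:ℝ) else 0)
      = (if i = j ∧ k = l then (1:ℝ) else 0) + (if i = k ∧ j = l then (1:ℝ) else 0)
        + (if i = l ∧ j = k then (1:ℝ) else 0)
        - 2 * (if i = j ∧ j = k ∧ k = l then (1:ℝ) else 0) := by
  by_cases h1 : i = j <;> by_cases h2 : k = l <;> by_cases h3 : i = k <;>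
    by_cases h4 : j = l <;> by_cases h5 : i = l <;> by_cases h6 : j = k <;>
    simp_all <;> norm_num

lemma inner_sum_eval' {d : ℕ} (m : Fin d → Fin d → Fin d → Fin d → ℝ) :
    (∑ i, ∑ k, ∑ j, ∑ l, (if i = j ∧ k = l then (1:ℝ) else 0) * m i j k l)
      = ∑ i, ∑ k, m i i k k := by
  simp [ite_and, ite_mul, Finset.sum_ite_eq, Finset.sum_ite_eq']

lemma inner_sum_eval {d : ℕ} (m : Fin d → Fin d → Fin d → Fin d → ℝ)
    (hsym : ∀ i j, m i j i j = m i j j i) :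
    (∑ i, ∑ k, ∑ j, ∑ l, (if (i = j ∧ k = l) ∨ (i = k ∧ j = l) ∨ (i = l ∧ j = k)
        then (1:ℝ) else 0) * m i j k l)
      = (∑ i, ∑ k, m i i k k) + 2 * (∑ i, ∑ j, m i j j i) - 2 * ∑ i, m i i i i := by
  simp_rw [ite_pair_split, sub_mul, add_mul, Finset.sum_sub_distrib, Finset.sum_add_distrib]
  rw [inner_sum_eval' m]
  have h2 : (∑ i, ∑ k, ∑ j, ∑ l, (if i = k ∧ j = l then (1:ℝ) else 0) * m i j k l)
      = ∑ i, ∑ j, m i j j i := by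
    simp [ite_and, ite_mul, Finset.sum_ite_eq, Finset.sum_ite_eq']
    exact Finset.sum_congr rfl fun i _ => Finset.sum_congr rfl fun j _ => (hsym i j)
  have h3 : (∑ i, ∑ k, ∑ j, ∑ l, (if i = l ∧ j = k then (1:ℝ) else 0) * m i j k l)
      = ∑ i, ∑ j, m i j j i := by
    simp [ite_and, ite_mul, Finset.sum_ite_eq, Finset.sum_ite_eq']
  have h4 : (∑ i, ∑ k, ∑ j, ∑ l, 2 * (if i = j ∧ j = k ∧ k = l then (1:ℝ) else 0) * m i j k l)
      = 2 * ∑ i, m i i i i := by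
    simp [ite_and, ite_mul, Finset.sum_ite_eq, Finset.sum_ite_eq', Finset.mul_sum]
  rw [h2, h3, h4]; ring

/-- For a random `d × R` matrix `A` with i.i.d. Rademacher entries and an independent
random `p × d` matrix `B` with `𝔼‖B‖_F⁴ < ∞`, writing `M = Bᵀ B`:
`𝔼‖B A‖_F⁴ = R² 𝔼[tr(M)²] + 2R 𝔼[tr(M²)] - 2R 𝔼[∑ᵢ Mᵢᵢ²]`. -/
theorem rademacher_matrix_prod_fourth_moment_eq
    {Ω : Type} [MeasurableSpace Ω] (μ : Measure Ω) [IsProbabilityMeasure μ]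
    (d R p : ℕ)
    (A : Ω → Fin d → Fin R → ℝ) (B : Ω → Fin p → Fin d → ℝ)
    (hAmeas : ∀ i j, Measurable (fun ω => A ω i j))
    (hAdist : ∀ i j, Measure.map (fun ω => A ω i j) μ = radDist)
    (hAiid : iIndepFun
      (fun q : Fin d × Fin R => fun ω => A ω q.1 q.2) μ)
    (hBmeas : Measurable B)
    (hAB : IndepFun A B μ)
    (hBint : Integrable (fun ω => (∑ i, ∑ j, (B ω i j) ^ 2) ^ 2) μ)
    (M : Ω → Matrix (Fin d) (Fin d) ℝ)
    (hM : ∀ ω, M ω = (Matrix.of (B ω))ᵀ * Matrix.of (B ω)) :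
    ∫ ω, (Matrix.trace ((Matrix.of (B ω) * Matrix.of (A ω))ᵀ
            * (Matrix.of (B ω) * Matrix.of (A ω)))) ^ 2 ∂μ
      = (R : ℝ) ^ 2 * (∫ ω, (Matrix.trace (M ω)) ^ 2 ∂μ)
        + 2 * R * (∫ ω, Matrix.trace ((M ω) ^ 2) ∂μ)
        - 2 * R * (∫ ω, ∑ i, (M ω i i) ^ 2 ∂μ) := by
  classical
  set X : Fin d × Fin R → Ω → ℝ := fun q ω => A ω q.1 q.2 with hX
  set S : Ω → ℝ := fun ω => ∑ i, ∑ j, (B ω i j) ^ 2 with hS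
  -- basic measurability
  have hBm : ∀ (t : Fin p) (i : Fin d), Measurable (fun ω => B ω t i) := fun t i =>
    (measurable_pi_apply i).comp ((measurable_pi_apply t).comp hBmeas)
  have hMeq : ∀ ω i j, M ω i j = ∑ t, B ω t i * B ω t j := by
    intro ω i j; rw [hM]; simp [Matrix.mul_apply]
  have hMm : ∀ i j, Measurable (fun ω => M ω i j) := by
    intro i j
    simp_rw [hMeq]
    exact Finset.measurable_sum _ fun t _ => (hBm t i).mul (hBm t j)
  have hMsym : ∀ ω i j, M ω i j = M ω j i := by
    intro ω i j; rw [hMeq, hMeq]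
    exact Finset.sum_congr rfl fun t _ => mul_comm _ _
  have hSnn : ∀ ω, 0 ≤ S ω := fun ω =>
    Finset.sum_nonneg fun i _ => Finset.sum_nonneg fun j _ => sq_nonneg _
  have hMb : ∀ ω (i j : Fin d), |M ω i j| ≤ S ω := by
    intro ω i j
    have h1 : |M ω i j| ≤ ∑ t, |B ω t i * B ω t j| := by
      rw [hMeq]; exact Finset.abs_sum_le_sum_abs _ _
    have h2 : ∑ t, |B ω t i * B ω t j|
        ≤ ∑ t, ((B ω t i) ^ 2 + (B ω t j) ^ 2) / 2 := by
      refine Finset.sum_le_sum fun t _ => ?_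
      rw [abs_mul]
      nlinarith [sq_nonneg (|B ω t i| - |B ω t j|), sq_abs (B ω t i),
        sq_abs (B ω t j)]
    have h3 : ∀ c : Fin d, ∑ t, (B ω t c) ^ 2 ≤ S ω := by
      intro c
      refine Finset.sum_le_sum fun t _ => ?_
      exact Finset.single_le_sum (fun j _ => sq_nonneg (B ω t j)) (Finset.mem_univ c)
    have h4 : ∑ t, ((B ω t i) ^ 2 + (B ω t j) ^ 2) / 2
        = ((∑ t, (B ω t i) ^ 2) + ∑ t, (B ω t j) ^ 2) / 2 := by
      rw [← Finset.sum_add_distrib, ← Finset.sum_div]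
    have := h3 i; have := h3 j
    linarith
  have hMint : ∀ i j k l : Fin d, Integrable (fun ω => M ω i j * M ω k l) μ := by
    intro i j k l
    refine Integrable.mono' hBint ((hMm i j).mul (hMm k l)).aestronglyMeasurable
      (Filter.Eventually.of_forall fun ω => ?_)
    have h1 := hMb ω i j; have h2 := hMb ω k l
    have h3 := hSnn ω
    have : ‖M ω i j * M ω k l‖ = |M ω i j| * |M ω k l| := by
      rw [Real.norm_eq_abs, abs_mul]
    rw [this]
    nlinarith [abs_nonneg (M ω i j), abs_nonneg (M ω k l)]
  set m : Fin d → Fin d → Fin d → Fin d → ℝ :=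
    fun i j k l => ∫ ω, M ω i j * M ω k l ∂μ with hm
  have hmsym : ∀ i j, m i j i j = m i j j i := by
    intro i j
    show (∫ ω, M ω i j * M ω i j ∂μ) = ∫ ω, M ω i j * M ω j i ∂μ
    refine integral_congr_ae (Filter.Eventually.of_forall fun ω => ?_)
    show M ω i j * M ω i j = M ω i j * M ω j i
    rw [← hMsym ω i j]
  -- A entries are ±1 a.e.
  have hA1 : ∀ q : Fin d × Fin R, ∀ᵐ ω ∂μ, |X q ω| ≤ 1 := by
    intro q
    have hm : MeasurableSet (({1, -1} : Set ℝ)ᶜ) :=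
      (by measurability : MeasurableSet ({1, -1} : Set ℝ)).compl
    have h0 : μ ((fun ω => A ω q.1 q.2) ⁻¹' ({1, -1} : Set ℝ)ᶜ) = 0 := by
      rw [← Measure.map_apply (hAmeas q.1 q.2) hm, hAdist]
      exact rad_compl
    have hsub : {ω | ¬ |X q ω| ≤ 1} ⊆ (fun ω => A ω q.1 q.2) ⁻¹' ({1, -1} : Set ℝ)ᶜ := by
      intro ω hω
      simp only [Set.mem_setOf_eq, not_le] at hω
      simp only [Set.mem_preimage, Set.mem_compl_iff, Set.mem_insert_iff,
        Set.mem_singleton_iff]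
      rintro (h | h) <;> rw [show A ω q.1 q.2 = X q ω from rfl] at h <;>
        rw [h] at hω <;> norm_num at hω
    rw [ae_iff]
    exact measure_mono_null hsub h0
  -- the basic term and its integral
  have hXm : ∀ q, Measurable (X q) := fun q => hAmeas q.1 q.2
  have hAdistX : ∀ q : Fin d × Fin R, Measure.map (X q) μ = radDist := fun q =>
    hAdist q.1 q.2
  have hgmeas : ∀ (r s : Fin R) (i j k l : Fin d),
      Measurable (fun ω => X (i,r) ω * X (j,r) ω * X (k,s) ω * X (l,s) ω) :=
    fun r s i j k l => (((hXm _).mul (hXm _)).mul (hXm _)).mul (hXm _)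
  have hgint : ∀ (r s : Fin R) (i j k l : Fin d),
      Integrable (fun ω => X (i,r) ω * X (j,r) ω * X (k,s) ω * X (l,s) ω) μ := by
    intro r s i j k l
    refine Integrable.mono' (integrable_const (1:ℝ))
      (hgmeas r s i j k l).aestronglyMeasurable ?_
    filter_upwards [hA1 (i,r), hA1 (j,r), hA1 (k,s), hA1 (l,s)] with ω h1 h2 h3 h4
    rw [Real.norm_eq_abs, abs_mul, abs_mul, abs_mul]
    have n1 := abs_nonneg (X (i,r) ω); have n2 := abs_nonneg (X (j,r) ω)
    have n3 := abs_nonneg (X (k,s) ω); have n4 := abs_nonneg (X (l,s) ω)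
    calc |X (i,r) ω| * |X (j,r) ω| * |X (k,s) ω| * |X (l,s) ω|
        ≤ 1 * 1 * 1 * 1 := by
          gcongr
      _ = 1 := by norm_num
  have hindep : ∀ (r s : Fin R) (i j k l : Fin d),
      IndepFun (fun ω => X (i,r) ω * X (j,r) ω * X (k,s) ω * X (l,s) ω)
        (fun ω => M ω i j * M ω k l) μ := by
    intro r s i j k l
    have hφ : Measurable (fun a : Fin d → Fin R → ℝ => a i r * a j r * a k s * a l s) := by
      have ev : ∀ (i' : Fin d) (r' : Fin R),
          Measurable (fun a : Fin d → Fin R → ℝ => a i' r') := fun i' r' =>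
        (measurable_pi_apply r').comp (measurable_pi_apply i')
      exact (((ev i r).mul (ev j r)).mul (ev k s)).mul (ev l s)
    have hψ : Measurable (fun b : Fin p → Fin d → ℝ =>
        (∑ t, b t i * b t j) * (∑ t, b t k * b t l)) := by
      have ev : ∀ (t : Fin p) (i' : Fin d),
          Measurable (fun b : Fin p → Fin d → ℝ => b t i') := fun t i' =>
        (measurable_pi_apply i').comp (measurable_pi_apply t)
      exact (Finset.measurable_sum _ fun t _ => (ev t i).mul (ev t j)).mul
        (Finset.measurable_sum _ fun t _ => (ev t k).mul (ev t l))
    have h := hAB.comp hφ hψ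
    have e1 : (fun a : Fin d → Fin R → ℝ => a i r * a j r * a k s * a l s) ∘ A
        = fun ω => X (i,r) ω * X (j,r) ω * X (k,s) ω * X (l,s) ω := rfl
    have e2 : (fun b : Fin p → Fin d → ℝ =>
          (∑ t, b t i * b t j) * (∑ t, b t k * b t l)) ∘ B
        = fun ω => M ω i j * M ω k l := by
      funext ω
      simp only [Function.comp_apply]
      rw [hMeq ω i j, hMeq ω k l]
    rwa [e1, e2] at h
  have hint_term : ∀ (r s : Fin R) (i j k l : Fin d),
      Integrable (fun ω =>
        (X (i,r) ω * X (j,r) ω * X (k,s) ω * X (l,s) ω) * (M ω i j * M ω k l)) μ := by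
    intro r s i j k l
    exact (hindep r s i j k l).integrable_mul (hgint r s i j k l) (hMint i j k l)
  have hfact : ∀ (r s : Fin R) (i j k l : Fin d),
      ∫ ω, (X (i,r) ω * X (j,r) ω * X (k,s) ω * X (l,s) ω) * (M ω i j * M ω k l) ∂μ
        = (if ((i,r) = (j,r) ∧ (k,s) = (l,s)) ∨ ((i,r) = (k,s) ∧ (j,r) = (l,s))
            ∨ ((i,r) = (l,s) ∧ (j,r) = (k,s)) then (1:ℝ) else 0) * m i j k l := by
    intro r s i j k l
    have h := (hindep r s i j k l).integral_mul_eq_mul_integral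
      (hgmeas r s i j k l).aestronglyMeasurable
      ((hMm i j).mul (hMm k l)).aestronglyMeasurable
    have e : (fun ω => X (i,r) ω * X (j,r) ω * X (k,s) ω * X (l,s) ω)
        * (fun ω => M ω i j * M ω k l)
        = fun ω => (X (i,r) ω * X (j,r) ω * X (k,s) ω * X (l,s) ω)
            * (M ω i j * M ω k l) := rfl
    rw [e] at h
    rw [h, rad_four hXm hAdistX hAiid (i,r) (j,r) (k,s) (l,s)]
  -- pointwise trace expansion
  have htrace : ∀ ω, Matrix.trace ((Matrix.of (B ω) * Matrix.of (A ω))ᵀ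
        * (Matrix.of (B ω) * Matrix.of (A ω)))
      = ∑ r : Fin R, ∑ i : Fin d, ∑ j : Fin d, X (i,r) ω * X (j,r) ω * M ω i j := by
    intro ω
    have h0 : Matrix.trace ((Matrix.of (B ω) * Matrix.of (A ω))ᵀ
        * (Matrix.of (B ω) * Matrix.of (A ω)))
        = ∑ r : Fin R, ∑ t : Fin p,
            (∑ i : Fin d, B ω t i * A ω i r) * (∑ j : Fin d, B ω t j * A ω j r) := by
      simp only [Matrix.trace, Matrix.diag, Matrix.mul_apply, Matrix.transpose_apply,
        Matrix.of_apply]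
    rw [h0]
    refine Finset.sum_congr rfl fun r _ => ?_
    have h1 : ∀ t : Fin p,
        (∑ i : Fin d, B ω t i * A ω i r) * (∑ j : Fin d, B ω t j * A ω j r)
        = ∑ i : Fin d, ∑ j : Fin d, (B ω t i * A ω i r) * (B ω t j * A ω j r) := by
      intro t; rw [Finset.sum_mul_sum]
    simp_rw [h1]
    rw [Finset.sum_comm]
    refine Finset.sum_congr rfl fun i _ => ?_
    rw [Finset.sum_comm]
    refine Finset.sum_congr rfl fun j _ => ?_
    rw [hMeq, Finset.mul_sum]
    exact Finset.sum_congr rfl fun t _ => by show _ = A ω i r * A ω j r * _; ring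
  have hsq : ∀ ω, (Matrix.trace ((Matrix.of (B ω) * Matrix.of (A ω))ᵀ
        * (Matrix.of (B ω) * Matrix.of (A ω)))) ^ 2
      = ∑ r : Fin R, ∑ s : Fin R, ∑ i : Fin d, ∑ k : Fin d, ∑ j : Fin d, ∑ l : Fin d,
          (X (i,r) ω * X (j,r) ω * X (k,s) ω * X (l,s) ω) * (M ω i j * M ω k l) := by
    intro ω
    rw [htrace ω, sq, Finset.sum_mul_sum]
    refine Finset.sum_congr rfl fun r _ => Finset.sum_congr rfl fun s _ => ?_
    rw [Finset.sum_mul_sum]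
    refine Finset.sum_congr rfl fun i _ => Finset.sum_congr rfl fun k _ => ?_
    rw [Finset.sum_mul_sum]
    refine Finset.sum_congr rfl fun j _ => Finset.sum_congr rfl fun l _ => ?_
    ring
  -- swap integral and sums
  have hswap : ∫ ω, (Matrix.trace ((Matrix.of (B ω) * Matrix.of (A ω))ᵀ
        * (Matrix.of (B ω) * Matrix.of (A ω)))) ^ 2 ∂μ
      = ∑ r : Fin R, ∑ s : Fin R, ∑ i : Fin d, ∑ k : Fin d, ∑ j : Fin d, ∑ l : Fin d,
          ∫ ω, (X (i,r) ω * X (j,r) ω * X (k,s) ω * X (l,s) ω)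
            * (M ω i j * M ω k l) ∂μ := by
    have i5 : ∀ (r s : Fin R) (i k j : Fin d), Integrable (fun ω => ∑ l : Fin d,
        (X (i,r) ω * X (j,r) ω * X (k,s) ω * X (l,s) ω) * (M ω i j * M ω k l)) μ :=
      fun r s i k j => integrable_finset_sum _ fun l _ => hint_term r s i j k l
    have i4 : ∀ (r s : Fin R) (i k : Fin d), Integrable (fun ω => ∑ j : Fin d, ∑ l : Fin d,
        (X (i,r) ω * X (j,r) ω * X (k,s) ω * X (l,s) ω) * (M ω i j * M ω k l)) μ :=
      fun r s i k => integrable_finset_sum _ fun j _ => i5 r s i k j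
    have i3 : ∀ (r s : Fin R) (i : Fin d),
        Integrable (fun ω => ∑ k : Fin d, ∑ j : Fin d, ∑ l : Fin d,
        (X (i,r) ω * X (j,r) ω * X (k,s) ω * X (l,s) ω) * (M ω i j * M ω k l)) μ :=
      fun r s i => integrable_finset_sum _ fun k _ => i4 r s i k
    have i2 : ∀ (r s : Fin R),
        Integrable (fun ω => ∑ i : Fin d, ∑ k : Fin d, ∑ j : Fin d, ∑ l : Fin d,
        (X (i,r) ω * X (j,r) ω * X (k,s) ω * X (l,s) ω) * (M ω i j * M ω k l)) μ :=
      fun r s => integrable_finset_sum _ fun i _ => i3 r s i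
    have i1 : ∀ r : Fin R,
        Integrable (fun ω => ∑ s : Fin R, ∑ i : Fin d, ∑ k : Fin d, ∑ j : Fin d, ∑ l : Fin d,
        (X (i,r) ω * X (j,r) ω * X (k,s) ω * X (l,s) ω) * (M ω i j * M ω k l)) μ :=
      fun r => integrable_finset_sum _ fun s _ => i2 r s
    simp_rw [hsq]
    rw [integral_finset_sum _ fun r _ => i1 r]
    refine Finset.sum_congr rfl fun r _ => ?_
    rw [integral_finset_sum _ fun s _ => i2 r s]
    refine Finset.sum_congr rfl fun s _ => ?_
    rw [integral_finset_sum _ fun i _ => i3 r s i]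
    refine Finset.sum_congr rfl fun i _ => ?_
    rw [integral_finset_sum _ fun k _ => i4 r s i k]
    refine Finset.sum_congr rfl fun k _ => ?_
    rw [integral_finset_sum _ fun j _ => i5 r s i k j]
    refine Finset.sum_congr rfl fun j _ => ?_
    rw [integral_finset_sum _ fun l _ => hint_term r s i j k l]
  -- evaluate inner four sums
  have hinner : ∀ r s : Fin R,
      (∑ i : Fin d, ∑ k : Fin d, ∑ j : Fin d, ∑ l : Fin d,
        ∫ ω, (X (i,r) ω * X (j,r) ω * X (k,s) ω * X (l,s) ω) * (M ω i j * M ω k l) ∂μ)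
      = (∑ i : Fin d, ∑ k : Fin d, m i i k k)
        + (if r = s then 2 * (∑ i : Fin d, ∑ j : Fin d, m i j j i)
              - 2 * (∑ i : Fin d, m i i i i) else 0) := by
    intro r s
    simp_rw [hfact]
    by_cases hrs : r = s
    · have hc : ∀ i j k l : Fin d,
          (if ((i,r) = (j,r) ∧ (k,s) = (l,s)) ∨ ((i,r) = (k,s) ∧ (j,r) = (l,s))
            ∨ ((i,r) = (l,s) ∧ (j,r) = (k,s)) then (1:ℝ) else 0)
          = (if (i = j ∧ k = l) ∨ (i = k ∧ j = l) ∨ (i = l ∧ j = k)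
              then (1:ℝ) else 0) := by
        intro i j k l
        refine if_congr ?_ rfl rfl
        simp [Prod.ext_iff, hrs]
      simp_rw [hc]
      rw [inner_sum_eval m hmsym, if_pos hrs]
      ring
    · have hc : ∀ i j k l : Fin d,
          (if ((i,r) = (j,r) ∧ (k,s) = (l,s)) ∨ ((i,r) = (k,s) ∧ (j,r) = (l,s))
            ∨ ((i,r) = (l,s) ∧ (j,r) = (k,s)) then (1:ℝ) else 0)
          = (if i = j ∧ k = l then (1:ℝ) else 0) := by
        intro i j k l
        refine if_congr ?_ rfl rfl
        simp [Prod.ext_iff, hrs]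
      simp_rw [hc]
      rw [inner_sum_eval' m, if_neg hrs, add_zero]
  -- right-hand side integrals
  have hI1 : ∫ ω, (Matrix.trace (M ω)) ^ 2 ∂μ = ∑ i : Fin d, ∑ k : Fin d, m i i k k := by
    have he : ∀ ω, (Matrix.trace (M ω)) ^ 2 = ∑ i : Fin d, ∑ k : Fin d, M ω i i * M ω k k := by
      intro ω
      simp only [Matrix.trace, Matrix.diag]
      rw [sq, Finset.sum_mul_sum]
    simp_rw [he]
    rw [integral_finset_sum _ fun i _ => integrable_finset_sum _ fun k _ => hMint i i k k]
    exact Finset.sum_congr rfl fun i _ => integral_finset_sum _ fun k _ => hMint i i k k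
  have hI2 : ∫ ω, Matrix.trace ((M ω) ^ 2) ∂μ = ∑ i : Fin d, ∑ j : Fin d, m i j j i := by
    have he : ∀ ω, Matrix.trace ((M ω) ^ 2) = ∑ i : Fin d, ∑ j : Fin d, M ω i j * M ω j i := by
      intro ω
      simp [Matrix.trace, Matrix.diag, pow_two, Matrix.mul_apply]
    simp_rw [he]
    rw [integral_finset_sum _ fun i _ => integrable_finset_sum _ fun j _ => hMint i j j i]
    exact Finset.sum_congr rfl fun i _ => integral_finset_sum _ fun j _ => hMint i j j i
  have hI3 : ∫ ω, ∑ i, (M ω i i) ^ 2 ∂μ = ∑ i : Fin d, m i i i i := by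
    have he : ∀ ω, (∑ i : Fin d, (M ω i i) ^ 2) = ∑ i : Fin d, M ω i i * M ω i i := by
      intro ω
      exact Finset.sum_congr rfl fun i _ => sq (M ω i i) ▸ rfl
    simp_rw [he]
    exact integral_finset_sum _ fun i _ => hMint i i i i
  rw [hswap, hI1, hI2, hI3]
  have : ∀ r : Fin R, (∑ s : Fin R, ∑ i : Fin d, ∑ k : Fin d, ∑ j : Fin d, ∑ l : Fin d,
      ∫ ω, (X (i,r) ω * X (j,r) ω * X (k,s) ω * X (l,s) ω) * (M ω i j * M ω k l) ∂μ)
      = R * (∑ i : Fin d, ∑ k : Fin d, m i i k k)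
        + (2 * (∑ i : Fin d, ∑ j : Fin d, m i j j i) - 2 * (∑ i : Fin d, m i i i i)) := by
    intro r
    simp_rw [hinner r]
    rw [Finset.sum_add_distrib, Finset.sum_const, Finset.sum_ite_eq]
    simp [mul_comm]
  simp_rw [this]
  rw [Finset.sum_add_distrib, Finset.sum_const, Finset.sum_const]
  simp only [Finset.card_univ, Fintype.card_fin, nsmul_eq_mul]
  ring
end
end

section
/- (Wishart-type lemma for Rademacher matrices) Let $\mathbf{A} \in \mathbb{R}^{d \times R}$ be a random matrix whose entries are i.i.d. Rademacher random variables, and let $\mathbf{B} \in \mathbb{R}^{p \times d}$ be a random matrix independent of $\mathbf{A}$ with $\mathbb{E}\|\mathbf{B}\|_F^4 < \infty$. Then $\mathbb{E}\,\|\mathbf{B}\mathbf{A}\|_F^4 \le R(R+2)\,\mathbb{E}\,\|\mathbf{B}\|_F^4$. -/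
open MeasureTheory ProbabilityTheory Matrix Finset

noncomputable section

lemma radDist_sq_one : ∀ᵐ x ∂radDist, x ^ 2 = 1 := by
  rw [ae_iff]
  have hs : MeasurableSet {x : ℝ | ¬ x ^ 2 = 1} :=
    ((measurable_id.pow_const 2) (measurableSet_singleton (1:ℝ))).compl
  rw [radDist, Measure.add_apply, Measure.smul_apply, Measure.smul_apply,
    Measure.dirac_apply' _ hs, Measure.dirac_apply' _ hs]
  norm_num [Set.indicator_apply]

lemma radDist_integral (f : ℝ → ℝ) :
    ∫ x, f x ∂radDist = 2⁻¹ * f 1 + 2⁻¹ * f (-1) := by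
  have h : ∀ a : ℝ, Integrable f ((2⁻¹ : ENNReal) • Measure.dirac a) := fun a =>
    Integrable.smul_measure ((integrable_const (f a)).congr (ae_eq_dirac f).symm) (by norm_num)
  rw [radDist, integral_add_measure (h 1) (h (-1)), integral_smul_measure,
    integral_smul_measure, integral_dirac, integral_dirac]
  norm_num

lemma radDist_integral_id : ∫ x, x ∂radDist = 0 := by
  rw [radDist_integral]; norm_num

lemma abs_eq_one_of_sq_eq_one {x : ℝ} (hx : x ^ 2 = 1) : |x| = 1 := by
  have h : (x - 1) * (x + 1) = 0 := by linear_combination hx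
  rcases mul_eq_zero.mp h with h | h
  · rw [abs_eq zero_le_one]; left; linarith
  · rw [abs_eq zero_le_one]; right; linarith

lemma ite_and_mul_ite (P Q : Prop) [Decidable P] [Decidable Q] :
    (if P ∧ Q then (1:ℝ) else 0) = (if P then 1 else 0) * (if Q then 1 else 0) := by
  by_cases hP : P <;> by_cases hQ : Q <;> simp [hP, hQ]

lemma ite_or_le (w : ℝ) (P Q R : Prop) [Decidable P] [Decidable Q] [Decidable R]
    (h1 : P → 0 ≤ w) (h2 : Q → 0 ≤ w) (h3 : R → 0 ≤ w) :
    w * (if P ∨ Q ∨ R then (1:ℝ) else 0) ≤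
      w * (if P then 1 else 0) + w * (if Q then 1 else 0) + w * (if R then 1 else 0) := by
  have hnn : ∀ (C : Prop) [Decidable C], (C → 0 ≤ w) → 0 ≤ w * (if C then (1:ℝ) else 0) := by
    intro C _ hC
    by_cases h : C
    · rw [if_pos h, mul_one]; exact hC h
    · rw [if_neg h, mul_zero]
  by_cases h : P ∨ Q ∨ R
  · rw [if_pos h, mul_one]
    have t1 := hnn P h1
    have t2 := hnn Q h2
    have t3 := hnn R h3
    rcases h with hP | hQ | hR
    · rw [if_pos hP, mul_one]; linarith
    · rw [if_pos hQ, mul_one]; linarith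
    · rw [if_pos hR, mul_one]; linarith
  · push_neg at h
    rw [if_neg (by tauto), if_neg h.1, if_neg h.2.1, if_neg h.2.2]
    simp


lemma sum_ite_const {ι : Type*} (s : Finset ι) (c : Prop) [Decidable c] (f : ι → ℝ) :
    (∑ x ∈ s, if c then f x else 0) = if c then ∑ x ∈ s, f x else 0 := by
  split_ifs <;> simp
set_option maxHeartbeats 2000000 in
/-- Wishart-type lemma for Rademacher matrices: for a random `d × R` matrix `A` with
i.i.d. Rademacher entries and an independent random `p × d` matrix `B` with
`𝔼‖B‖_F⁴ < ∞`: `𝔼‖B A‖_F⁴ ≤ R(R+2) 𝔼‖B‖_F⁴`. -/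
theorem rademacher_matrix_prod_fourth_moment_le
    {Ω : Type} [MeasurableSpace Ω] (μ : Measure Ω) [IsProbabilityMeasure μ]
    (d R p : ℕ)
    (A : Ω → Fin d → Fin R → ℝ) (B : Ω → Fin p → Fin d → ℝ)
    (hAmeas : ∀ i j, Measurable (fun ω => A ω i j))
    (hAdist : ∀ i j, Measure.map (fun ω => A ω i j) μ = radDist)
    (hAiid : iIndepFun
      (fun q : Fin d × Fin R => fun ω => A ω q.1 q.2) μ)
    (hBmeas : Measurable B)
    (hAB : IndepFun A B μ)
    (hBint : Integrable (fun ω => (∑ i, ∑ j, (B ω i j) ^ 2) ^ 2) μ) :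
    ∫ ω, (∑ i, ∑ j, ((Matrix.of (B ω) * Matrix.of (A ω)) i j) ^ 2) ^ 2 ∂μ
      ≤ (R : ℝ) * (R + 2) * (∫ ω, (∑ i, ∑ j, (B ω i j) ^ 2) ^ 2 ∂μ) := by
  classical
  set X : Fin d × Fin R → Ω → ℝ := fun q => fun ω => A ω q.1 q.2 with hXdef
  set T : Ω → Fin d → Fin d → ℝ := fun ω k l => ∑ i, B ω i k * B ω i l with hTdef
  set N : Ω → ℝ := fun ω => ∑ i, ∑ j, (B ω i j) ^ 2 with hNdef
  set Q : Ω → Fin R → ℝ := fun ω j => ∑ k, ∑ l, T ω k l * (X (k, j) ω * X (l, j) ω)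
    with hQdef
  -- measurability
  have hBe : ∀ (i : Fin p) (k : Fin d), Measurable fun ω => B ω i k := fun i k =>
    (measurable_pi_apply k).comp ((measurable_pi_apply i).comp hBmeas)
  have hXmeas : ∀ q, Measurable (X q) := fun q => hAmeas q.1 q.2
  have hXaesm : ∀ q, AEStronglyMeasurable (X q) μ := fun q => (hXmeas q).aestronglyMeasurable
  have hTmeas : ∀ k l, Measurable fun ω => T ω k l := by
    intro k l
    simp only [hTdef]
    exact Finset.measurable_sum _ fun i _ => (hBe i k).mul (hBe i l)
  have hNmeas : Measurable N := by
    simp only [hNdef]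
    exact Finset.measurable_sum _ fun i _ =>
      Finset.measurable_sum _ fun k _ => (hBe i k).pow_const 2
  -- a.e. the entries of A square to 1
  have hX1 : ∀ᵐ ω ∂μ, ∀ q : Fin d × Fin R, X q ω ^ 2 = 1 := by
    rw [ae_all_iff]
    intro q
    have h : ∀ᵐ x ∂(Measure.map (fun ω => A ω q.1 q.2) μ), x ^ 2 = 1 := by
      rw [hAdist q.1 q.2]; exact radDist_sq_one
    exact (ae_map_iff (hAmeas q.1 q.2).aemeasurable
      ((measurable_id.pow_const 2) (measurableSet_singleton (1:ℝ)))).mp h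
  have hint1 : ∀ f : Ω → ℝ, (f =ᵐ[μ] fun _ => (1:ℝ)) → ∫ ω, f ω ∂μ = 1 := by
    intro f hf
    rw [integral_congr_ae hf]; simp
  -- mean zero
  have hEX : ∀ q, ∫ ω, X q ω ∂μ = 0 := by
    intro q
    have h : ∫ ω, X q ω ∂μ = ∫ x, x ∂(Measure.map (fun ω => A ω q.1 q.2) μ) :=
      (integral_map (hAmeas q.1 q.2).aemeasurable aestronglyMeasurable_id).symm
    rw [h, hAdist, radDist_integral_id]
  -- second moments
  have hE2 : ∀ s t, ∫ ω, X s ω * X t ω ∂μ = if s = t then (1:ℝ) else 0 := by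
    intro s t
    by_cases h : s = t
    · subst h
      rw [if_pos rfl]
      refine hint1 _ ?_
      filter_upwards [hX1] with ω h1
      have := h1 s
      nlinarith
    · rw [if_neg h, (hAiid.indepFun h).integral_fun_mul_eq_mul_integral (hXaesm s) (hXaesm t), hEX, hEX, mul_zero]
  -- third-moment-type vanishing
  have hE31 : ∀ s t, s ≠ t → ∫ ω, X s ω * X s ω * X s ω * X t ω ∂μ = 0 := by
    intro s t hst
    have hco : Measurable fun x : ℝ => x * x * x :=
      (measurable_id.mul measurable_id).mul measurable_id
    have h := ((hAiid.indepFun hst).comp hco measurable_id).integral_fun_mul_eq_mul_integral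
      (((hXmeas s).mul (hXmeas s)).mul (hXmeas s)).aestronglyMeasurable
      (hXmeas t).aestronglyMeasurable
    have h2 : integral μ (id ∘ X t) = 0 := hEX t
    refine Eq.trans ?_ (h.trans (by rw [h2, mul_zero]))
    rfl
  -- grouped fourth moments
  have key2 : ∀ a b c e : Fin d × Fin R, a ≠ c → a ≠ e → b ≠ c → b ≠ e →
      ∫ ω, (X a ω * X b ω) * (X c ω * X e ω) ∂μ
        = (if a = b then (1:ℝ) else 0) * (if c = e then 1 else 0) := by
    intro a b c e h1 h2 h3 h4
    rw [← hE2 a b, ← hE2 c e]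
    exact (hAiid.indepFun_mul_mul hXmeas a b c e h1 h2 h3 h4).integral_fun_mul_eq_mul_integral
      ((hXmeas a).mul (hXmeas b)).aestronglyMeasurable
      ((hXmeas c).mul (hXmeas e)).aestronglyMeasurable
  have hE4 : ∀ s t u v : Fin d × Fin R,
      ∫ ω, X s ω * X t ω * X u ω * X v ω ∂μ
        = if (s = t ∧ u = v) ∨ (s = u ∧ t = v) ∨ (s = v ∧ t = u) then (1:ℝ) else 0 := by
    intro s t u v
    by_cases hc : (s = t ∧ u = v) ∨ (s = u ∧ t = v) ∨ (s = v ∧ t = u)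
    · rw [if_pos hc]
      refine hint1 _ ?_
      filter_upwards [hX1] with ω h1
      rcases hc with ⟨h2, h3⟩ | ⟨h2, h3⟩ | ⟨h2, h3⟩
      · rw [← h2, ← h3]; linear_combination (X u ω)^2 * h1 s + h1 u
      · rw [← h2, ← h3]; linear_combination (X t ω)^2 * h1 s + h1 t
      · rw [← h2, ← h3]; linear_combination (X t ω)^2 * h1 s + h1 t
    · rw [if_neg hc]
      push_neg at hc
      obtain ⟨hn1, hn2, hn3⟩ := hc
      have imp1 : s = t → u ≠ v := hn1
      have imp2 : s = u → t ≠ v := hn2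
      have imp3 : s = v → t ≠ u := hn3
      by_cases hst : s = t
      · have huv : u ≠ v := imp1 hst
        by_cases hsu : s = u
        · rw [show (fun ω => X s ω * X t ω * X u ω * X v ω)
              = fun ω => X s ω * X s ω * X s ω * X v ω from
            funext fun ω => by rw [← hst, ← hsu]]
          exact hE31 s v (by rw [hsu]; exact huv)
        · by_cases hsv : s = v
          · rw [show (fun ω => X s ω * X t ω * X u ω * X v ω)
                = fun ω => X s ω * X s ω * X s ω * X u ω from
              funext fun ω => by rw [← hst, ← hsv]; ring]
            exact hE31 s u hsu
          · rw [show (fun ω => X s ω * X t ω * X u ω * X v ω)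
                = fun ω => (X s ω * X t ω) * (X u ω * X v ω) from
              funext fun ω => by ring,
              key2 s t u v hsu hsv (by rw [← hst]; exact hsu) (by rw [← hst]; exact hsv)]
            simp [huv]
      · by_cases hsu : s = u
        · have htv : t ≠ v := imp2 hsu
          by_cases hsv : s = v
          · rw [show (fun ω => X s ω * X t ω * X u ω * X v ω)
                = fun ω => X s ω * X s ω * X s ω * X t ω from
              funext fun ω => by rw [← hsu, ← hsv]; ring]
            exact hE31 s t hst
          · rw [show (fun ω => X s ω * X t ω * X u ω * X v ω)
                = fun ω => (X s ω * X u ω) * (X t ω * X v ω) from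
              funext fun ω => by ring,
              key2 s u t v hst hsv (by rw [← hsu]; exact hst) (by rw [← hsu]; exact hsv)]
            simp [htv]
        · by_cases hsv : s = v
          · have htu : t ≠ u := imp3 hsv
            rw [show (fun ω => X s ω * X t ω * X u ω * X v ω)
                = fun ω => (X s ω * X v ω) * (X t ω * X u ω) from
              funext fun ω => by ring,
              key2 s v t u hst hsu (by rw [← hsv]; exact hst) (by rw [← hsv]; exact hsu)]
            simp [htu]
          · by_cases htu : t = u
            · by_cases htv : t = v
              · rw [show (fun ω => X s ω * X t ω * X u ω * X v ω)
                    = fun ω => X t ω * X t ω * X t ω * X s ω from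
                  funext fun ω => by rw [← htu, ← htv]; ring]
                exact hE31 t s (Ne.symm hst)
              · rw [show (fun ω => X s ω * X t ω * X u ω * X v ω)
                    = fun ω => (X s ω * X v ω) * (X t ω * X u ω) from
                  funext fun ω => by ring,
                  key2 s v t u hst hsu (Ne.symm htv) (by rw [← htu]; exact Ne.symm htv)]
                simp [hsv]
            · by_cases htv : t = v
              · rw [show (fun ω => X s ω * X t ω * X u ω * X v ω)
                    = fun ω => (X s ω * X u ω) * (X t ω * X v ω) from
                  funext fun ω => by ring,
                  key2 s u t v hst (by rw [← htv]; exact hst) (Ne.symm htu)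
                    (by rw [← htv]; exact Ne.symm htu)]
                simp [hsu]
              · by_cases huv : u = v
                · rw [show (fun ω => X s ω * X t ω * X u ω * X v ω)
                      = fun ω => (X s ω * X t ω) * (X u ω * X v ω) from
                    funext fun ω => by ring,
                    key2 s t u v hsu (by rw [← huv]; exact hsu) htu (by rw [← huv]; exact htu)]
                  simp [hst]
                · rw [show (fun ω => X s ω * X t ω * X u ω * X v ω)
                      = fun ω => (X s ω * X t ω) * (X u ω * X v ω) from
                    funext fun ω => by ring,
                    key2 s t u v hsu hsv htu htv]
                  simp [hst]
  -- B-side pointwise facts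
  have hTdiag : ∀ (ω) (k : Fin d), 0 ≤ T ω k k := by
    intro ω k; simp only [hTdef]; exact Finset.sum_nonneg fun i _ => mul_self_nonneg _
  have hTsymm : ∀ (ω) (k l : Fin d), T ω k l = T ω l k := by
    intro ω k l; simp only [hTdef]; exact Finset.sum_congr rfl fun i _ => mul_comm _ _
  have hN0 : ∀ ω, 0 ≤ N ω := by
    intro ω; simp only [hNdef]; positivity
  have hcol : ∀ (ω) (m : Fin d), (∑ i, B ω i m ^ 2) ≤ N ω := by
    intro ω m; simp only [hNdef]
    exact Finset.sum_le_sum fun i _ =>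
      Finset.single_le_sum (fun j _ => sq_nonneg (B ω i j)) (Finset.mem_univ m)
  have hcolnn : ∀ (ω) (m : Fin d), 0 ≤ ∑ i, B ω i m ^ 2 := fun ω m => by positivity
  have hTsq : ∀ (ω) (k l : Fin d), T ω k l ^ 2 ≤ (∑ i, B ω i k ^ 2) * (∑ i, B ω i l ^ 2) := by
    intro ω k l
    simp only [hTdef]
    exact Finset.sum_mul_sq_le_sq_mul_sq _ _ _
  have hTabs : ∀ (ω) (k l : Fin d), |T ω k l| ≤ N ω := by
    intro ω k l
    have h1 := hTsq ω k l
    have h2 := hcol ω k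
    have h3 := hcol ω l
    have h4 := hcolnn ω k
    have h5 := hcolnn ω l
    have h6 := hN0 ω
    have h7 : T ω k l ^ 2 ≤ N ω ^ 2 := by nlinarith
    have h8 := abs_nonneg (T ω k l)
    nlinarith [sq_abs (T ω k l)]
  have htr : ∀ ω, ∑ k, T ω k k = N ω := by
    intro ω; simp only [hTdef, hNdef]
    rw [Finset.sum_comm]
    exact Finset.sum_congr rfl fun i _ => Finset.sum_congr rfl fun k _ => (pow_two (B ω i k)).symm
  have hcolsum : ∀ ω, ∑ k, (∑ i, B ω i k ^ 2) = N ω := by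
    intro ω; simp only [hNdef]; rw [Finset.sum_comm]
  -- integrability
  have hNsqint : Integrable (fun ω => N ω ^ 2) μ := by simp only [hNdef]; exact hBint
  have hTTmeas : ∀ k l k' l' : Fin d, Measurable fun ω => T ω k l * T ω k' l' :=
    fun k l k' l' => (hTmeas k l).mul (hTmeas k' l')
  have hTTb : ∀ (ω) (k l k' l' : Fin d), ‖T ω k l * T ω k' l'‖ ≤ N ω ^ 2 := by
    intro ω k l k' l'
    rw [Real.norm_eq_abs, abs_mul, sq]
    exact mul_le_mul (hTabs ω k l) (hTabs ω k' l') (abs_nonneg _) (hN0 ω)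
  have hTTint : ∀ k l k' l' : Fin d, Integrable (fun ω => T ω k l * T ω k' l') μ :=
    fun k l k' l' => Integrable.mono' hNsqint (hTTmeas k l k' l').aestronglyMeasurable
      (Filter.Eventually.of_forall fun ω => hTTb ω k l k' l')
  have hXabs : ∀ᵐ ω ∂μ, ∀ q : Fin d × Fin R, |X q ω| = 1 := by
    filter_upwards [hX1] with ω h1
    exact fun q => abs_eq_one_of_sq_eq_one (h1 q)
  have htermint : ∀ (j j' : Fin R) (k l k' l' : Fin d),
      Integrable (fun ω => T ω k l * T ω k' l' *
        (X (k, j) ω * X (l, j) ω * X (k', j') ω * X (l', j') ω)) μ := by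
    intro j j' k l k' l'
    refine Integrable.mono' hNsqint (((hTTmeas k l k' l').mul
      ((((hXmeas (k, j)).mul (hXmeas (l, j))).mul (hXmeas (k', j'))).mul
        (hXmeas (l', j')))).aestronglyMeasurable) ?_
    filter_upwards [hXabs] with ω hx
    simp only [Real.norm_eq_abs, abs_mul]
    rw [hx (k, j), hx (l, j), hx (k', j'), hx (l', j')]
    nlinarith [hTabs ω k l, hTabs ω k' l', abs_nonneg (T ω k l), abs_nonneg (T ω k' l'), hN0 ω]
  -- factorize the generic term
  have hterm : ∀ (j j' : Fin R) (k l k' l' : Fin d),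
      ∫ ω, T ω k l * T ω k' l' *
          (X (k, j) ω * X (l, j) ω * X (k', j') ω * X (l', j') ω) ∂μ
        = (∫ ω, T ω k l * T ω k' l' ∂μ) *
          (if (((k, j) : Fin d × Fin R) = (l, j) ∧ ((k', j') : Fin d × Fin R) = (l', j'))
              ∨ (((k, j) : Fin d × Fin R) = (k', j') ∧ ((l, j) : Fin d × Fin R) = (l', j'))
              ∨ (((k, j) : Fin d × Fin R) = (l', j') ∧ ((l, j) : Fin d × Fin R) = (k', j'))
            then (1:ℝ) else 0) := by
    intro j j' k l k' l'
    have hg : Measurable (fun b : Fin p → Fin d → ℝ =>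
        (∑ i, b i k * b i l) * (∑ i, b i k' * b i l')) := by
      refine Measurable.mul ?_ ?_
      · exact Finset.measurable_sum _ fun i _ =>
          (by fun_prop : Measurable fun b : Fin p → Fin d → ℝ => b i k * b i l)
      · exact Finset.measurable_sum _ fun i _ =>
          (by fun_prop : Measurable fun b : Fin p → Fin d → ℝ => b i k' * b i l')
    have hphi : Measurable (fun a : Fin d → Fin R → ℝ => a k j * a l j * a k' j' * a l' j') := by
      have hm : ∀ (x : Fin d) (y : Fin R), Measurable fun a : Fin d → Fin R → ℝ => a x y :=
        fun x y => (measurable_pi_apply y).comp (measurable_pi_apply x)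
      exact (((hm k j).mul (hm l j)).mul (hm k' j')).mul (hm l' j')
    have hA' : Measurable A :=
      measurable_pi_lambda _ fun k => measurable_pi_lambda _ fun j => hAmeas k j
    have hI : IndepFun (fun ω => (∑ i, B ω i k * B ω i l) * (∑ i, B ω i k' * B ω i l'))
        (fun ω => A ω k j * A ω l j * A ω k' j' * A ω l' j') μ :=
      hAB.symm.comp hg hphi
    have he4 := hE4 (k, j) (l, j) (k', j') (l', j')
    simp only [hXdef] at he4
    simp only [hTdef, hXdef]
    exact (hI.integral_fun_mul_eq_mul_integral (hg.comp hBmeas).aestronglyMeasurable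
      (hphi.comp hA').aestronglyMeasurable).trans (by rw [he4])
  -- Q facts
  have hQmeas : ∀ jj : Fin R, Measurable fun ω => Q ω jj := by
    intro jj
    simp only [hQdef]
    exact Finset.measurable_sum _ fun k _ => Finset.measurable_sum _ fun l _ =>
      (hTmeas k l).mul ((hXmeas (k, jj)).mul (hXmeas (l, jj)))
  have hQabs : ∀ᵐ ω ∂μ, ∀ jj : Fin R, |Q ω jj| ≤ (d : ℝ) ^ 2 * N ω := by
    filter_upwards [hXabs] with ω hx
    intro jj
    simp only [hQdef]
    calc |∑ k, ∑ l, T ω k l * (X (k, jj) ω * X (l, jj) ω)|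
        ≤ ∑ k, |∑ l, T ω k l * (X (k, jj) ω * X (l, jj) ω)| := Finset.abs_sum_le_sum_abs _ _
      _ ≤ ∑ k, ∑ l : Fin d, |T ω k l * (X (k, jj) ω * X (l, jj) ω)| :=
          Finset.sum_le_sum fun k _ => Finset.abs_sum_le_sum_abs _ _
      _ ≤ ∑ _k : Fin d, ∑ _l : Fin d, N ω :=
          Finset.sum_le_sum fun k _ => Finset.sum_le_sum fun l _ => by
            rw [abs_mul, abs_mul, hx (k, jj), hx (l, jj), mul_one, mul_one]
            exact hTabs ω k l
      _ = (d : ℝ) ^ 2 * N ω := by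
          simp [Finset.sum_const, Finset.card_univ, nsmul_eq_mul]
          ring
  have hQQint : ∀ j j' : Fin R, Integrable (fun ω => Q ω j * Q ω j') μ := by
    intro j j'
    refine Integrable.mono' (hNsqint.const_mul ((d : ℝ) ^ 4))
      ((hQmeas j).mul (hQmeas j')).aestronglyMeasurable ?_
    filter_upwards [hQabs] with ω h
    rw [Real.norm_eq_abs, abs_mul]
    calc |Q ω j| * |Q ω j'| ≤ ((d : ℝ) ^ 2 * N ω) * ((d : ℝ) ^ 2 * N ω) :=
        mul_le_mul (h j) (h j') (abs_nonneg _) (by positivity)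
      _ = (d : ℝ) ^ 4 * N ω ^ 2 := by ring
  -- pointwise expansion of Q * Q
  have hQQpt : ∀ (j j' : Fin R) (ω), Q ω j * Q ω j'
      = ∑ k, ∑ l, ∑ k', ∑ l', T ω k l * T ω k' l' *
          (X (k, j) ω * X (l, j) ω * X (k', j') ω * X (l', j') ω) := by
    intro j j' ω
    simp only [hQdef]
    rw [Finset.sum_mul_sum]
    refine Finset.sum_congr rfl fun k _ => ?_
    calc ∑ k', (∑ l, T ω k l * (X (k, j) ω * X (l, j) ω)) *
            (∑ l', T ω k' l' * (X (k', j') ω * X (l', j') ω))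
        = ∑ k', ∑ l, (T ω k l * (X (k, j) ω * X (l, j) ω)) *
            (∑ l', T ω k' l' * (X (k', j') ω * X (l', j') ω)) :=
          Finset.sum_congr rfl fun k' _ => Finset.sum_mul _ _ _
      _ = ∑ l, ∑ k', (T ω k l * (X (k, j) ω * X (l, j) ω)) *
            (∑ l', T ω k' l' * (X (k', j') ω * X (l', j') ω)) := Finset.sum_comm
      _ = ∑ l, ∑ k', ∑ l', T ω k l * T ω k' l' *
            (X (k, j) ω * X (l, j) ω * (X (k', j') ω * X (l', j') ω)) := by
          refine Finset.sum_congr rfl fun l _ => Finset.sum_congr rfl fun k' _ => ?_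
          rw [Finset.mul_sum]
          exact Finset.sum_congr rfl fun l' _ => by ring
      _ = ∑ l, ∑ k', ∑ l', T ω k l * T ω k' l' *
            (X (k, j) ω * X (l, j) ω * X (k', j') ω * X (l', j') ω) := by
          refine Finset.sum_congr rfl fun l _ => Finset.sum_congr rfl fun k' _ =>
            Finset.sum_congr rfl fun l' _ => by ring
  have hQQexp : ∀ j j' : Fin R, ∫ ω, Q ω j * Q ω j' ∂μ
      = ∑ k, ∑ l, ∑ k', ∑ l', (∫ ω, T ω k l * T ω k' l' ∂μ) *
          (if (((k, j) : Fin d × Fin R) = (l, j) ∧ ((k', j') : Fin d × Fin R) = (l', j'))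
              ∨ (((k, j) : Fin d × Fin R) = (k', j') ∧ ((l, j) : Fin d × Fin R) = (l', j'))
              ∨ (((k, j) : Fin d × Fin R) = (l', j') ∧ ((l, j) : Fin d × Fin R) = (k', j'))
            then (1:ℝ) else 0) := by
    intro j j'
    rw [show (fun ω => Q ω j * Q ω j') = fun ω => ∑ k, ∑ l, ∑ k', ∑ l',
        T ω k l * T ω k' l' * (X (k, j) ω * X (l, j) ω * X (k', j') ω * X (l', j') ω) from
      funext (hQQpt j j')]
    rw [integral_finset_sum _ fun k _ => integrable_finset_sum _ fun l _ =>
      integrable_finset_sum _ fun k' _ => integrable_finset_sum _ fun l' _ =>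
        htermint j j' k l k' l']
    refine Finset.sum_congr rfl fun k _ => ?_
    rw [integral_finset_sum _ fun l _ => integrable_finset_sum _ fun k' _ =>
      integrable_finset_sum _ fun l' _ => htermint j j' k l k' l']
    refine Finset.sum_congr rfl fun l _ => ?_
    rw [integral_finset_sum _ fun k' _ => integrable_finset_sum _ fun l' _ =>
      htermint j j' k l k' l']
    refine Finset.sum_congr rfl fun k' _ => ?_
    rw [integral_finset_sum _ fun l' _ => htermint j j' k l k' l']
    exact Finset.sum_congr rfl fun l' _ => hterm j j' k l k' l'
  -- diagonal sums
  have hsum1 : ∑ k, ∑ k' : Fin d, ∫ ω, T ω k k * T ω k' k' ∂μ = ∫ ω, N ω ^ 2 ∂μ := by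
    have hpt : ∀ ω, ∑ k, ∑ k' : Fin d, T ω k k * T ω k' k' = N ω ^ 2 := by
      intro ω
      rw [← Finset.sum_mul_sum, htr ω, ← sq]
    calc ∑ k, ∑ k' : Fin d, ∫ ω, T ω k k * T ω k' k' ∂μ
        = ∑ k : Fin d, ∫ ω, ∑ k' : Fin d, T ω k k * T ω k' k' ∂μ :=
          Finset.sum_congr rfl fun k _ =>
            (integral_finset_sum _ fun k' _ => hTTint k k k' k').symm
      _ = ∫ ω, ∑ k, ∑ k' : Fin d, T ω k k * T ω k' k' ∂μ :=
          (integral_finset_sum _ fun k _ =>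
            integrable_finset_sum _ fun k' _ => hTTint k k k' k').symm
      _ = ∫ ω, N ω ^ 2 ∂μ :=
          integral_congr_ae (Filter.Eventually.of_forall fun ω => hpt ω)
  have hsum2 : ∑ k, ∑ l : Fin d, ∫ ω, T ω k l * T ω k l ∂μ ≤ ∫ ω, N ω ^ 2 ∂μ := by
    have hpt : ∀ ω, ∑ k, ∑ l : Fin d, T ω k l * T ω k l ≤ N ω ^ 2 := by
      intro ω
      have h1 : ∀ k l : Fin d, T ω k l * T ω k l ≤ (∑ i, B ω i k ^ 2) * (∑ i, B ω i l ^ 2) := by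
        intro k l
        rw [← pow_two]
        exact hTsq ω k l
      calc ∑ k, ∑ l : Fin d, T ω k l * T ω k l
          ≤ ∑ k, ∑ l : Fin d, (∑ i, B ω i k ^ 2) * (∑ i, B ω i l ^ 2) :=
            Finset.sum_le_sum fun k _ => Finset.sum_le_sum fun l _ => h1 k l
        _ = (∑ k, ∑ i, B ω i k ^ 2) * (∑ l, ∑ i, B ω i l ^ 2) :=
            (Finset.sum_mul_sum _ _ _ _).symm
        _ = N ω ^ 2 := by rw [hcolsum ω, ← sq]
    calc ∑ k, ∑ l : Fin d, ∫ ω, T ω k l * T ω k l ∂μ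
        = ∑ k : Fin d, ∫ ω, ∑ l : Fin d, T ω k l * T ω k l ∂μ :=
          Finset.sum_congr rfl fun k _ =>
            (integral_finset_sum _ fun l _ => hTTint k l k l).symm
      _ = ∫ ω, ∑ k, ∑ l : Fin d, T ω k l * T ω k l ∂μ :=
          (integral_finset_sum _ fun k _ =>
            integrable_finset_sum _ fun l _ => hTTint k l k l).symm
      _ ≤ ∫ ω, N ω ^ 2 ∂μ :=
          integral_mono (integrable_finset_sum _ fun k _ =>
            integrable_finset_sum _ fun l _ => hTTint k l k l) hNsqint fun ω => hpt ω
  have hsum3 : ∑ k, ∑ l : Fin d, ∫ ω, T ω k l * T ω l k ∂μ ≤ ∫ ω, N ω ^ 2 ∂μ := by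
    have h : ∀ k l : Fin d, ∫ ω, T ω k l * T ω l k ∂μ = ∫ ω, T ω k l * T ω k l ∂μ :=
      fun k l => integral_congr_ae (Filter.Eventually.of_forall fun ω => by
        show T ω k l * T ω l k = T ω k l * T ω k l
        rw [hTsymm ω l k])
    calc ∑ k, ∑ l : Fin d, ∫ ω, T ω k l * T ω l k ∂μ
        = ∑ k, ∑ l : Fin d, ∫ ω, T ω k l * T ω k l ∂μ :=
          Finset.sum_congr rfl fun k _ => Finset.sum_congr rfl fun l _ => h k l
      _ ≤ ∫ ω, N ω ^ 2 ∂μ := hsum2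
  -- the per-pair bound
  have hQQbound : ∀ j j' : Fin R, ∫ ω, Q ω j * Q ω j' ∂μ
      ≤ (if j = j' then (3:ℝ) else 1) * ∫ ω, N ω ^ 2 ∂μ := by
    intro j j'
    rw [hQQexp j j']
    by_cases hjj : j = j'
    · subst hjj
      rw [if_pos rfl]
      calc ∑ k, ∑ l, ∑ k', ∑ l', (∫ ω, T ω k l * T ω k' l' ∂μ) *
              (if (((k, j) : Fin d × Fin R) = (l, j) ∧ ((k', j) : Fin d × Fin R) = (l', j))
                  ∨ (((k, j) : Fin d × Fin R) = (k', j) ∧ ((l, j) : Fin d × Fin R) = (l', j))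
                  ∨ (((k, j) : Fin d × Fin R) = (l', j) ∧ ((l, j) : Fin d × Fin R) = (k', j))
                then (1:ℝ) else 0)
          = ∑ k, ∑ l, ∑ k', ∑ l', (∫ ω, T ω k l * T ω k' l' ∂μ) *
              (if (k' = l' ∧ k = l) ∨ (l = l' ∧ k = k') ∨ (k = l' ∧ l = k') then (1:ℝ) else 0) := by
            refine Finset.sum_congr rfl fun k _ => Finset.sum_congr rfl fun l _ =>
              Finset.sum_congr rfl fun k' _ => Finset.sum_congr rfl fun l' _ => ?_
            congr 1
            refine if_congr ?_ rfl rfl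
            constructor
            · rintro (⟨h1, h2⟩ | ⟨h1, h2⟩ | ⟨h1, h2⟩) <;>
                simp only [Prod.mk.injEq] at h1 h2 <;> tauto
            · rintro (⟨h1, h2⟩ | ⟨h1, h2⟩ | ⟨h1, h2⟩) <;>
                simp only [Prod.mk.injEq] <;> tauto
        _ ≤ ∑ k, ∑ l, ∑ k', ∑ l',
              ((∫ ω, T ω k l * T ω k' l' ∂μ) * (if k' = l' ∧ k = l then (1:ℝ) else 0)
              + (∫ ω, T ω k l * T ω k' l' ∂μ) * (if l = l' ∧ k = k' then (1:ℝ) else 0)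
              + (∫ ω, T ω k l * T ω k' l' ∂μ) * (if k = l' ∧ l = k' then (1:ℝ) else 0)) := by
            refine Finset.sum_le_sum fun k _ => Finset.sum_le_sum fun l _ =>
              Finset.sum_le_sum fun k' _ => Finset.sum_le_sum fun l' _ => ?_
            refine ite_or_le _ _ _ _ ?_ ?_ ?_
            · rintro ⟨rfl, rfl⟩
              exact integral_nonneg fun ω => mul_nonneg (hTdiag ω k) (hTdiag ω k')
            · rintro ⟨rfl, rfl⟩
              exact integral_nonneg fun ω => mul_self_nonneg _
            · rintro ⟨rfl, rfl⟩
              exact integral_nonneg fun ω => by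
                rw [hTsymm ω l k]; exact mul_self_nonneg _
        _ = (∑ k, ∑ l, ∑ k', ∑ l', (∫ ω, T ω k l * T ω k' l' ∂μ) *
                (if k' = l' ∧ k = l then (1:ℝ) else 0))
            + (∑ k, ∑ l, ∑ k', ∑ l', (∫ ω, T ω k l * T ω k' l' ∂μ) *
                (if l = l' ∧ k = k' then (1:ℝ) else 0))
            + (∑ k, ∑ l, ∑ k', ∑ l', (∫ ω, T ω k l * T ω k' l' ∂μ) *
                (if k = l' ∧ l = k' then (1:ℝ) else 0)) := by
            simp only [Finset.sum_add_distrib]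
        _ ≤ (∫ ω, N ω ^ 2 ∂μ) + (∫ ω, N ω ^ 2 ∂μ) + (∫ ω, N ω ^ 2 ∂μ) := by
            have hS1 : (∑ k, ∑ l, ∑ k', ∑ l', (∫ ω, T ω k l * T ω k' l' ∂μ) *
                (if k' = l' ∧ k = l then (1:ℝ) else 0)) = ∫ ω, N ω ^ 2 ∂μ := by
              simp only [mul_ite, mul_one, mul_zero, ite_and, Finset.sum_ite_eq,
                Finset.mem_univ, if_true, sum_ite_const, Finset.sum_const_zero]
              exact hsum1
            have hS2 : (∑ k, ∑ l, ∑ k', ∑ l', (∫ ω, T ω k l * T ω k' l' ∂μ) *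
                (if l = l' ∧ k = k' then (1:ℝ) else 0)) ≤ ∫ ω, N ω ^ 2 ∂μ := by
              simp only [mul_ite, mul_one, mul_zero, ite_and, Finset.sum_ite_eq,
                Finset.mem_univ, if_true, sum_ite_const, Finset.sum_const_zero]
              exact hsum2
            have hS3 : (∑ k, ∑ l, ∑ k', ∑ l', (∫ ω, T ω k l * T ω k' l' ∂μ) *
                (if k = l' ∧ l = k' then (1:ℝ) else 0)) ≤ ∫ ω, N ω ^ 2 ∂μ := by
              simp only [mul_ite, mul_one, mul_zero, ite_and, Finset.sum_ite_eq,
                Finset.mem_univ, if_true, sum_ite_const, Finset.sum_const_zero]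
              exact hsum3
            exact add_le_add (add_le_add hS1.le hS2) hS3
        _ = 3 * ∫ ω, N ω ^ 2 ∂μ := by ring
    · rw [if_neg hjj, one_mul]
      refine le_of_eq ?_
      calc ∑ k, ∑ l, ∑ k', ∑ l', (∫ ω, T ω k l * T ω k' l' ∂μ) *
              (if (((k, j) : Fin d × Fin R) = (l, j) ∧ ((k', j') : Fin d × Fin R) = (l', j'))
                  ∨ (((k, j) : Fin d × Fin R) = (k', j') ∧ ((l, j) : Fin d × Fin R) = (l', j'))
                  ∨ (((k, j) : Fin d × Fin R) = (l', j') ∧ ((l, j) : Fin d × Fin R) = (k', j'))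
                then (1:ℝ) else 0)
          = ∑ k, ∑ l, ∑ k', ∑ l', (∫ ω, T ω k l * T ω k' l' ∂μ) *
              (if k' = l' ∧ k = l then (1:ℝ) else 0) := by
            refine Finset.sum_congr rfl fun k _ => Finset.sum_congr rfl fun l _ =>
              Finset.sum_congr rfl fun k' _ => Finset.sum_congr rfl fun l' _ => ?_
            congr 1
            refine if_congr ?_ rfl rfl
            constructor
            · rintro (⟨h1, h2⟩ | ⟨h1, h2⟩ | ⟨h1, h2⟩) <;>
                simp only [Prod.mk.injEq] at h1 h2 <;> tauto
            · rintro ⟨h1, h2⟩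
              simp only [Prod.mk.injEq]
              tauto
        _ = ∫ ω, N ω ^ 2 ∂μ := by
            simp only [mul_ite, mul_one, mul_zero, ite_and, Finset.sum_ite_eq,
              Finset.mem_univ, if_true, sum_ite_const, Finset.sum_const_zero]
            exact hsum1
  -- counting
  have hcount : ∑ j : Fin R, ∑ j' : Fin R, (if j = j' then (3:ℝ) else 1) * (∫ ω, N ω ^ 2 ∂μ)
      = (R : ℝ) * (R + 2) * ∫ ω, N ω ^ 2 ∂μ := by
    have h1 : ∀ j : Fin R, ∑ j' : Fin R, (if j = j' then (3:ℝ) else 1) = (R : ℝ) + 2 := by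
      intro j
      have h2 : ∀ j' : Fin R, (if j = j' then (3:ℝ) else 1)
          = 1 + (if j = j' then (2:ℝ) else 0) := by
        intro j'; by_cases h : j = j' <;> simp [h] <;> norm_num
      rw [Finset.sum_congr rfl fun j' _ => h2 j', Finset.sum_add_distrib,
        Finset.sum_const, Finset.sum_ite_eq, Finset.card_univ, Fintype.card_fin]
      simp
    calc ∑ j : Fin R, ∑ j' : Fin R, (if j = j' then (3:ℝ) else 1) * (∫ ω, N ω ^ 2 ∂μ)
        = ∑ _j : Fin R, ((R : ℝ) + 2) * ∫ ω, N ω ^ 2 ∂μ :=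
          Finset.sum_congr rfl fun j _ => by rw [← Finset.sum_mul, h1 j]
      _ = (R : ℝ) * (R + 2) * ∫ ω, N ω ^ 2 ∂μ := by
          rw [Finset.sum_const, Finset.card_univ, Fintype.card_fin, nsmul_eq_mul]
          ring
  -- final assembly
  have hQexp : ∀ ω, (∑ i, ∑ j, ((Matrix.of (B ω) * Matrix.of (A ω)) i j) ^ 2) = ∑ j, Q ω j := by
    intro ω
    rw [Finset.sum_comm]
    refine Finset.sum_congr rfl fun j _ => ?_
    simp only [hQdef, hTdef, hXdef, Matrix.mul_apply, Matrix.of_apply, pow_two]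
    calc ∑ i, (∑ k, B ω i k * A ω k j) * (∑ l, B ω i l * A ω l j)
        = ∑ i, ∑ k, ∑ l, (B ω i k * A ω k j) * (B ω i l * A ω l j) := by
          refine Finset.sum_congr rfl fun i _ => ?_
          rw [Finset.sum_mul_sum]
      _ = ∑ k, ∑ i, ∑ l, (B ω i k * A ω k j) * (B ω i l * A ω l j) := Finset.sum_comm
      _ = ∑ k, ∑ l, ∑ i, (B ω i k * A ω k j) * (B ω i l * A ω l j) :=
          Finset.sum_congr rfl fun k _ => Finset.sum_comm
      _ = ∑ k, ∑ l, (∑ i, B ω i k * B ω i l) * (A ω k j * A ω l j) := by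
          refine Finset.sum_congr rfl fun k _ => Finset.sum_congr rfl fun l _ => ?_
          rw [Finset.sum_mul]
          exact Finset.sum_congr rfl fun i _ => by ring
  calc ∫ ω, (∑ i, ∑ j, ((Matrix.of (B ω) * Matrix.of (A ω)) i j) ^ 2) ^ 2 ∂μ
      = ∫ ω, ∑ j, ∑ j', Q ω j * Q ω j' ∂μ := by
        refine integral_congr_ae (Filter.Eventually.of_forall fun ω => ?_)
        show (∑ i, ∑ j, ((Matrix.of (B ω) * Matrix.of (A ω)) i j) ^ 2) ^ 2
            = ∑ j, ∑ j', Q ω j * Q ω j'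
        rw [hQexp ω, sq, Finset.sum_mul_sum]
    _ = ∑ j, ∑ j', ∫ ω, Q ω j * Q ω j' ∂μ := by
        rw [integral_finset_sum _ fun j _ => integrable_finset_sum _ fun j' _ => hQQint j j']
        exact Finset.sum_congr rfl fun j _ =>
          integral_finset_sum _ fun j' _ => hQQint j j'
    _ ≤ ∑ j, ∑ j', (if j = j' then (3:ℝ) else 1) * ∫ ω, N ω ^ 2 ∂μ :=
        Finset.sum_le_sum fun j _ => Finset.sum_le_sum fun j' _ => hQQbound j j'
    _ = (R : ℝ) * (R + 2) * ∫ ω, N ω ^ 2 ∂μ := hcount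
    _ = (R : ℝ) * (R + 2) * ∫ ω, (∑ i, ∑ j, (B ω i j) ^ 2) ^ 2 ∂μ := by
        simp only [hNdef]

end
end

section
/- Let $N \ge 1$, let $d_1,\dots,d_N, R$ be positive integers, and let $\mathcal{X} \in \mathbb{R}^{d_1 \times \cdots \times d_N}$ be a fixed tensor. Let $\mathcal{G}^1 \in \mathbb{R}^{1 \times d_1 \times R}$, $\mathcal{G}^n \in \mathbb{R}^{R \times d_n \times R}$ for $1 < n < N$, and $\mathcal{G}^N \in \mathbb{R}^{R \times d_N \times 1}$ be random core tensors whose entries are all i.i.d. standard Gaussian $\mathcal{N}(0,1)$, and let $\mathcal{T} = [\![\mathcal{G}^1, \dots, \mathcal{G}^N]\!]$ be the corresponding tensor train tensor. Then $\mathbb{E}\,\langle \mathcal{T}, \mathcal{X} \rangle^2 = R^{N-1}\,\|\mathcal{X}\|_F^2$. -/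
open MeasureTheory ProbabilityTheory Matrix Finset

noncomputable section

section AuxTT
open Real Filter NNReal ENNReal

lemma int_lin_exp : ∫ x : ℝ, x * Real.exp (-(2⁻¹ : ℝ) * x ^ 2) = 0 := by
  have hderiv : ∀ x : ℝ, HasDerivAt (fun x : ℝ => -Real.exp (-(2⁻¹ : ℝ) * x ^ 2))
      (x * Real.exp (-(2⁻¹ : ℝ) * x ^ 2)) x := by
    intro x
    refine HasDerivAt.congr_deriv (((hasDerivAt_pow 2 x).const_mul (-(2⁻¹ : ℝ))).exp).neg ?_
    all_goals simp only [id_eq, pow_one, Nat.cast_ofNat]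
    all_goals ring
  exact integral_eq_zero_of_hasDerivAt_of_integrable hderiv
    (integrable_mul_exp_neg_mul_sq (by norm_num))
    ((integrable_exp_neg_mul_sq (by norm_num)).neg)

lemma integrable_sq_exp : Integrable (fun x : ℝ => x ^ 2 * Real.exp (-(2⁻¹ : ℝ) * x ^ 2)) := by
  have := integrable_rpow_mul_exp_neg_mul_sq (b := 2⁻¹) (by norm_num) (s := 2) (by norm_num)
  convert this using 2 with x
  all_goals rw [show ((2 : ℝ)) = ((2 : ℕ) : ℝ) by norm_num, Real.rpow_natCast]
  all_goals norm_num

lemma tendsto_xexp_top : Tendsto (fun x : ℝ => x * Real.exp (-(2⁻¹ : ℝ) * x ^ 2)) atTop (nhds 0) := by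
  have h := rpow_mul_exp_neg_mul_sq_isLittleO_exp_neg (b := 2⁻¹) (by norm_num) 1
  have hlin : Tendsto (fun x : ℝ => -(2⁻¹ : ℝ) * x) atTop atBot :=
    tendsto_id.const_mul_atTop_of_neg (by norm_num)
  have h2 := Real.tendsto_exp_atBot.comp hlin
  have := h.isBigO.trans_tendsto (by simpa [Function.comp_def] using h2)
  simpa [Real.rpow_one] using this

lemma tendsto_xexp_bot :
    Tendsto (fun x : ℝ => -(x * Real.exp (-(2⁻¹ : ℝ) * x ^ 2))) atBot (nhds 0) := by
  have h := tendsto_xexp_top.comp tendsto_neg_atBot_atTop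
  simpa [Function.comp_def, neg_sq] using h

lemma int_sq_exp : ∫ x : ℝ, x ^ 2 * Real.exp (-(2⁻¹ : ℝ) * x ^ 2)
    = ∫ x : ℝ, Real.exp (-(2⁻¹ : ℝ) * x ^ 2) := by
  have hderiv : ∀ x : ℝ, HasDerivAt (fun x : ℝ => -(x * Real.exp (-(2⁻¹ : ℝ) * x ^ 2)))
      (x ^ 2 * Real.exp (-(2⁻¹ : ℝ) * x ^ 2) - Real.exp (-(2⁻¹ : ℝ) * x ^ 2)) x := by
    intro x
    refine HasDerivAt.congr_deriv ((hasDerivAt_id x).mul (((hasDerivAt_pow 2 x).const_mul (-(2⁻¹ : ℝ))).exp)).neg ?_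
    all_goals simp only [id_eq, pow_one, Nat.cast_ofNat]
    all_goals ring
  have hint : Integrable (fun x : ℝ => x ^ 2 * Real.exp (-(2⁻¹ : ℝ) * x ^ 2)
      - Real.exp (-(2⁻¹ : ℝ) * x ^ 2)) :=
    integrable_sq_exp.sub (integrable_exp_neg_mul_sq (by norm_num))
  have htop : Tendsto (fun x : ℝ => -(x * Real.exp (-(2⁻¹ : ℝ) * x ^ 2))) atTop (nhds 0) := by
    simpa using tendsto_xexp_top.neg
  have h0 : ∫ x : ℝ, (x ^ 2 * Real.exp (-(2⁻¹ : ℝ) * x ^ 2) - Real.exp (-(2⁻¹ : ℝ) * x ^ 2)) = 0 - 0 :=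
    integral_of_hasDerivAt_of_tendsto hderiv hint tendsto_xexp_bot htop
  rw [integral_sub integrable_sq_exp (integrable_exp_neg_mul_sq (by norm_num))] at h0
  linarith

lemma gpdf_eq (x : ℝ) : gaussianPDFReal 0 1 x
    = (Real.sqrt (2 * π))⁻¹ * Real.exp (-(2⁻¹ : ℝ) * x ^ 2) := by
  simp only [gaussianPDFReal, NNReal.coe_one, mul_one, sub_zero]
  ring_nf

lemma integral_gaussianReal_std (g : ℝ → ℝ) :
    ∫ x, g x ∂(gaussianReal 0 1) = ∫ x, gaussianPDFReal 0 1 x * g x := by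
  rw [gaussianReal_of_var_ne_zero 0 one_ne_zero]
  have h : (gaussianPDF 0 1) = fun x => ((Real.toNNReal (gaussianPDFReal 0 1 x)) : ENNReal) := by
    funext x; rfl
  rw [h, integral_withDensity_eq_integral_smul
    ((measurable_gaussianPDFReal 0 1).real_toNNReal) g]
  congr 1
  funext x
  simp [NNReal.smul_def, Real.coe_toNNReal _ (gaussianPDFReal_nonneg 0 1 x)]

lemma integrable_gaussianReal_std (g : ℝ → ℝ)
    (h : Integrable (fun x => g x * gaussianPDFReal 0 1 x)) :
    Integrable g (gaussianReal 0 1) := by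
  rw [gaussianReal_of_var_ne_zero 0 one_ne_zero, gaussianPDF_def]
  rw [integrable_withDensity_iff (measurable_gaussianPDFReal 0 1).ennreal_ofReal
    (Eventually.of_forall fun x => ENNReal.ofReal_lt_top)]
  refine h.congr (Eventually.of_forall fun x => ?_)
  dsimp only
  rw [ENNReal.toReal_ofReal (gaussianPDFReal_nonneg 0 1 x)]

lemma integrable_id_gaussianReal : Integrable (fun x : ℝ => x) (gaussianReal 0 1) := by
  refine integrable_gaussianReal_std _ ?_
  have : Integrable (fun x : ℝ => (Real.sqrt (2 * π))⁻¹ * (x * Real.exp (-(2⁻¹ : ℝ) * x ^ 2))) :=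
    (integrable_mul_exp_neg_mul_sq (by norm_num)).const_mul _
  refine this.congr (Eventually.of_forall fun x => ?_)
  dsimp only
  rw [gpdf_eq]; ring

lemma integrable_sq_gaussianReal : Integrable (fun x : ℝ => x ^ 2) (gaussianReal 0 1) := by
  refine integrable_gaussianReal_std _ ?_
  have : Integrable (fun x : ℝ => (Real.sqrt (2 * π))⁻¹ * (x ^ 2 * Real.exp (-(2⁻¹ : ℝ) * x ^ 2))) :=
    integrable_sq_exp.const_mul _
  refine this.congr (Eventually.of_forall fun x => ?_)
  dsimp only
  rw [gpdf_eq]; ring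

lemma mom1 : ∫ x, x ∂(gaussianReal 0 1) = 0 := by
  rw [integral_gaussianReal_std]
  have : ∫ x : ℝ, gaussianPDFReal 0 1 x * x
      = (Real.sqrt (2 * π))⁻¹ * ∫ x : ℝ, x * Real.exp (-(2⁻¹ : ℝ) * x ^ 2) := by
    rw [← integral_const_mul]
    congr 1; funext x; rw [gpdf_eq]; ring
  rw [this, int_lin_exp, mul_zero]

lemma mom2 : ∫ x, x ^ 2 ∂(gaussianReal 0 1) = 1 := by
  rw [integral_gaussianReal_std]
  have h1 : ∫ x : ℝ, gaussianPDFReal 0 1 x * x ^ 2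
      = (Real.sqrt (2 * π))⁻¹ * ∫ x : ℝ, x ^ 2 * Real.exp (-(2⁻¹ : ℝ) * x ^ 2) := by
    rw [← integral_const_mul]
    congr 1; funext x; rw [gpdf_eq]; ring
  rw [h1, int_sq_exp]
  have h2 : (Real.sqrt (2 * π))⁻¹ * ∫ x : ℝ, Real.exp (-(2⁻¹ : ℝ) * x ^ 2)
      = ∫ x : ℝ, gaussianPDFReal 0 1 x := by
    rw [← integral_const_mul]
    congr 1; funext x; rw [gpdf_eq]
  rw [h2, integral_gaussianPDFReal_eq_one 0 one_ne_zero]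

lemma iIndep_integral_prod {Ω ι : Type*} [MeasurableSpace Ω] {μ : Measure Ω}
    [IsProbabilityMeasure μ] {X : ι → Ω → ℝ}
    (hi : iIndepFun X μ) (hm : ∀ i, Measurable (X i))
    (hint : ∀ i, Integrable (X i) μ) (s : Finset ι) :
    Integrable (fun ω => ∏ i ∈ s, X i ω) μ ∧
      (∫ ω, ∏ i ∈ s, X i ω ∂μ) = ∏ i ∈ s, ∫ ω, X i ω ∂μ := by
  classical
  induction s using Finset.cons_induction with
  | empty => simp
  | cons a s ha ih =>
    have hprodfun : (∏ j ∈ s, X j) = fun ω => ∏ i ∈ s, X i ω := by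
      funext ω; simp
    have hindep : IndepFun (fun ω => ∏ i ∈ s, X i ω) (X a) μ := by
      have h := hi.indepFun_finset_prod_of_notMem hm ha
      rwa [hprodfun] at h
    have hmulfun : ((fun ω => ∏ i ∈ s, X i ω) * X a) = fun ω => ∏ i ∈ Finset.cons a s ha, X i ω := by
      funext ω
      simp only [Pi.mul_apply, Finset.prod_cons]; ring
    have hint2 : Integrable (fun ω => ∏ i ∈ Finset.cons a s ha, X i ω) μ := by
      rw [← hmulfun]
      exact hindep.integrable_mul ih.1 (hint a)
    refine ⟨hint2, ?_⟩
    have := hindep.integral_mul_eq_mul_integral ih.1.1 (hint a).1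
    rw [hmulfun] at this
    rw [this, ih.2, Finset.prod_cons, mul_comm]

lemma gauss_pow_integrable {Ω : Type*} [MeasurableSpace Ω] {μ : Measure Ω}
    [IsProbabilityMeasure μ] {e : Ω → ℝ} (hmeas : Measurable e)
    (hdist : Measure.map e μ = gaussianReal 0 1) {k : ℕ} (hk : k ≤ 2) :
    Integrable (fun ω => e ω ^ k) μ := by
  interval_cases k
  · simp
  · have h : Integrable (fun x : ℝ => x) (Measure.map e μ) := by
      rw [hdist]; exact integrable_id_gaussianReal
    have := (integrable_map_measure aestronglyMeasurable_id hmeas.aemeasurable).mp h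
    simpa [Function.comp_def] using this
  · have h : Integrable (fun x : ℝ => x ^ 2) (Measure.map e μ) := by
      rw [hdist]; exact integrable_sq_gaussianReal
    have := (integrable_map_measure (by fun_prop) hmeas.aemeasurable).mp h
    simpa [Function.comp_def] using this

lemma gauss_pow_integral {Ω : Type*} [MeasurableSpace Ω] {μ : Measure Ω}
    {e : Ω → ℝ} (hmeas : Measurable e)
    (hdist : Measure.map e μ = gaussianReal 0 1) (k : ℕ) :
    ∫ ω, e ω ^ k ∂μ = ∫ x, x ^ k ∂(gaussianReal 0 1) := by
  rw [← hdist, integral_map hmeas.aemeasurable (by fun_prop)]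

lemma prod_count {ι κ : Type*} [Fintype ι] [Fintype κ] [DecidableEq ι] (h : κ → ι) (f : ι → ℝ) :
    ∏ n : κ, f (h n) = ∏ s : ι, f s ^ (univ.filter fun n => h n = s).card := by
  rw [Finset.prod_comp]
  refine Finset.prod_subset (Finset.subset_univ _) ?_
  intro s _ hs
  have : (univ.filter fun n => h n = s) = ∅ := by
    rw [Finset.filter_eq_empty_iff]
    intro n _ hn
    exact hs (Finset.mem_image.mpr ⟨n, Finset.mem_univ n, hn⟩)
  rw [this]
  simp

lemma gauss_prod_moment {Ω : Type*} [MeasurableSpace Ω] {μ : Measure Ω} [IsProbabilityMeasure μ]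
    {ι : Type*} [Fintype ι] [DecidableEq ι] {E : ι → Ω → ℝ}
    (hmeas : ∀ s, Measurable (E s))
    (hindep : iIndepFun E μ)
    (hdist : ∀ s, Measure.map (E s) μ = gaussianReal 0 1)
    {κ : Type*} [Fintype κ] [DecidableEq κ]
    (p q : κ → ι) (hp : ∀ n m, p n = p m → n = m) (hq : ∀ n m, q n = q m → n = m)
    (hpq : ∀ n m, p n = q m → n = m) :
    Integrable (fun ω => (∏ n, E (p n) ω) * (∏ n, E (q n) ω)) μ ∧
      (∫ ω, (∏ n, E (p n) ω) * (∏ n, E (q n) ω) ∂μ) = if p = q then 1 else 0 := by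
  classical
  set cp : ι → ℕ := fun s => (univ.filter fun n => p n = s).card with hcp
  set cq : ι → ℕ := fun s => (univ.filter fun n => q n = s).card with hcq
  set m : ι → ℕ := fun s => cp s + cq s with hm
  have hcp_le : ∀ s, cp s ≤ 1 := by
    intro s
    refine Finset.card_le_one.2 fun a ha b hb => ?_
    simp only [Finset.mem_filter] at ha hb
    exact hp a b (ha.2.trans hb.2.symm)
  have hcq_le : ∀ s, cq s ≤ 1 := by
    intro s
    refine Finset.card_le_one.2 fun a ha b hb => ?_
    simp only [Finset.mem_filter] at ha hb
    exact hq a b (ha.2.trans hb.2.symm)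
  have hm_le : ∀ s, m s ≤ 2 := fun s => by
    have := hcp_le s; have := hcq_le s; simp only [hm]; omega
  have hrw : (fun ω => (∏ n, E (p n) ω) * (∏ n, E (q n) ω))
      = fun ω => ∏ s : ι, E s ω ^ m s := by
    funext ω
    rw [prod_count p (fun s => E s ω), prod_count q (fun s => E s ω),
      ← Finset.prod_mul_distrib]
    exact Finset.prod_congr rfl fun s _ => (pow_add _ _ _).symm
  have hindep' : iIndepFun (fun s ω => E s ω ^ m s) μ :=
    hindep.comp (fun s (x : ℝ) => x ^ m s) (fun s => measurable_id.pow_const _)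
  have hmeas' : ∀ s, Measurable (fun ω => E s ω ^ m s) := fun s => (hmeas s).pow_const _
  have hint' : ∀ s, Integrable (fun ω => E s ω ^ m s) μ := fun s =>
    gauss_pow_integrable (hmeas s) (hdist s) (hm_le s)
  obtain ⟨hint, heq⟩ := iIndep_integral_prod hindep' hmeas' hint' Finset.univ
  rw [hrw]
  refine ⟨hint, ?_⟩
  rw [heq]
  have hval : ∀ s, ∫ ω, E s ω ^ m s ∂μ = ∫ x, x ^ m s ∂(gaussianReal 0 1) := fun s =>
    gauss_pow_integral (hmeas s) (hdist s) _
  by_cases hpq' : p = q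
  · subst hpq'
    rw [if_pos rfl]
    refine Finset.prod_eq_one fun s _ => ?_
    rw [hval s]
    have : m s = 2 * cp s := by simp only [hm, hcq, hcp]; omega
    rcases Nat.le_one_iff_eq_zero_or_eq_one.mp (hcp_le s) with h | h
    · rw [this, h]; simp
    · rw [this, h]; simpa using mom2
  · rw [if_neg hpq']
    obtain ⟨n, hn⟩ := Function.ne_iff.mp hpq'
    refine Finset.prod_eq_zero (Finset.mem_univ (p n)) ?_
    have h1 : cp (p n) = 1 := by
      refine le_antisymm (hcp_le _) ?_
      rw [Nat.one_le_iff_ne_zero, hcp]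
      simp only [ne_eq, Finset.card_eq_zero, Finset.filter_eq_empty_iff]
      push_neg
      exact ⟨n, Finset.mem_univ n, rfl⟩
    have h2 : cq (p n) = 0 := by
      rw [hcq]
      simp only [Finset.card_eq_zero, Finset.filter_eq_empty_iff]
      intro a _ ha
      exact hn ((hpq n a ha.symm) ▸ ha.symm)
    have : m (p n) = 1 := by simp only [hm]; omega
    rw [hval, this]
    simpa using mom1

end AuxTT

lemma sum_ttPath {N : ℕ} (d : Fin N → ℕ) (ρ : Fin (N + 1) → ℕ)
    (g : (n : Fin N) → Fin (ρ n.castSucc) → Fin (d n) → Fin (ρ n.succ) → ℝ)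
    (i : (n : Fin N) → Fin (d n)) :
    ∑ a, ∑ b, ttPath d ρ g i a b
      = ∑ r : ((n : Fin (N + 1)) → Fin (ρ n)),
          ∏ n : Fin N, g n (r n.castSucc) (i n) (r n.succ) := by
  unfold ttPath
  have h1 : ∑ a, ∑ b, ∑ r : ((n : Fin (N + 1)) → Fin (ρ n)),
      (if r 0 = a ∧ r (Fin.last N) = b then ∏ n : Fin N, g n (r n.castSucc) (i n) (r n.succ) else 0)
      = ∑ r : ((n : Fin (N + 1)) → Fin (ρ n)), ∑ a, ∑ b,
      (if r 0 = a ∧ r (Fin.last N) = b then ∏ n : Fin N, g n (r n.castSucc) (i n) (r n.succ) else 0) :=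
    (Finset.sum_congr rfl fun a _ => Finset.sum_comm).trans Finset.sum_comm
  rw [h1]
  refine Finset.sum_congr rfl fun r _ => ?_
  simp [ite_and, Finset.sum_ite_eq]

/-- Expected isometry (second moment) for a TT tensor with i.i.d. standard Gaussian core
entries: `𝔼⟨𝒯, 𝒳⟩² = R^(N-1) ‖𝒳‖_F²`. -/
theorem tt_moment_gaussian_sq
    {Ω : Type} [MeasurableSpace Ω] (μ : Measure Ω) [IsProbabilityMeasure μ]
    (N : ℕ) (hN : 1 ≤ N) (d : Fin N → ℕ) (hd : ∀ n, 0 < d n) (R : ℕ) (hR : 0 < R)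
    (ρ : Fin (N + 1) → ℕ) (hρ0 : ρ 0 = 1) (hρlast : ρ (Fin.last N) = 1)
    (hρmid : ∀ n : Fin (N + 1), n ≠ 0 → n ≠ Fin.last N → ρ n = R)
    (X : ((n : Fin N) → Fin (d n)) → ℝ)
    (G : Ω → (n : Fin N) → Fin (ρ n.castSucc) → Fin (d n) → Fin (ρ n.succ) → ℝ)
    (hGmeas : ∀ n a i b, Measurable (fun ω => G ω n a i b))
    (hGdist : ∀ n a i b, Measure.map (fun ω => G ω n a i b) μ = gaussianReal 0 1)
    (hGindep : iIndepFun
      (fun p : (Σ n : Fin N, Fin (ρ n.castSucc) × Fin (d n) × Fin (ρ n.succ)) =>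
        fun ω => G ω p.1 p.2.1 p.2.2.1 p.2.2.2) μ) :
    ∫ ω, (∑ i, X i * ∑ a, ∑ b, ttPath d ρ (G ω) i a b) ^ 2 ∂μ
      = (R : ℝ) ^ (N - 1) * ∑ i, (X i) ^ 2 := by
  classical
  -- notation
  let ι := (Σ n : Fin N, Fin (ρ n.castSucc) × Fin (d n) × Fin (ρ n.succ))
  let E : ι → Ω → ℝ := fun p ω => G ω p.1 p.2.1 p.2.2.1 p.2.2.2
  let pidx : (((n : Fin N) → Fin (d n)) × ((n : Fin (N + 1)) → Fin (ρ n))) → Fin N → ι :=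
    fun z n => ⟨n, (z.2 n.castSucc, z.1 n, z.2 n.succ)⟩
  have hEmeas : ∀ s : ι, Measurable (E s) := fun s => hGmeas s.1 s.2.1 s.2.2.1 s.2.2.2
  have hEdist : ∀ s : ι, Measure.map (E s) μ = gaussianReal 0 1 :=
    fun s => hGdist s.1 s.2.1 s.2.2.1 s.2.2.2
  have hfirst : ∀ z (n : Fin N), (pidx z n).1 = n := fun z n => rfl
  -- injectivity facts
  have hinj : ∀ z z' (n m : Fin N), pidx z n = pidx z' m → n = m := by
    intro z z' n m h
    exact congrArg Sigma.fst h
  -- key two-path moment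
  have key : ∀ z z', Integrable (fun ω => (∏ n, E (pidx z n) ω) * (∏ n, E (pidx z' n) ω)) μ ∧
      (∫ ω, (∏ n, E (pidx z n) ω) * (∏ n, E (pidx z' n) ω) ∂μ)
        = if pidx z = pidx z' then 1 else 0 := fun z z' =>
    gauss_prod_moment hEmeas hGindep hEdist (pidx z) (pidx z')
      (hinj z z) (hinj z' z') (hinj z z')
  -- path equality iff index equality
  have hpidx_inj : ∀ z z', pidx z = pidx z' ↔ z = z' := by
    intro z z'
    constructor
    · intro h
      have hcomp : ∀ n : Fin N, z.2 n.castSucc = z'.2 n.castSucc ∧ z.1 n = z'.1 n ∧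
          z.2 n.succ = z'.2 n.succ := by
        intro n
        have hn := congrFun h n
        have := eq_of_heq (Sigma.mk.inj_iff.mp hn).2
        exact ⟨congrArg Prod.fst this, congrArg Prod.fst (congrArg Prod.snd this),
          congrArg Prod.snd (congrArg Prod.snd this)⟩
      have h1 : z.1 = z'.1 := funext fun n => (hcomp n).2.1
      have h2 : z.2 = z'.2 := by
        funext t
        rcases Fin.eq_castSucc_or_eq_last t with ⟨n, rfl⟩ | rfl
        · exact (hcomp n).1
        · have hlast : (⟨N - 1, by omega⟩ : Fin N).succ = Fin.last N := by
            ext; simp [Fin.last]; omega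
          rw [← hlast]
          exact (hcomp ⟨N - 1, by omega⟩).2.2
      exact Prod.ext h1 h2
    · rintro rfl; rfl
  -- rewrite the random variable
  have hA : (fun ω => (∑ i, X i * ∑ a, ∑ b, ttPath d ρ (G ω) i a b) ^ 2)
      = fun ω => ∑ z : (((n : Fin N) → Fin (d n)) × ((n : Fin (N + 1)) → Fin (ρ n))),
          ∑ z' : (((n : Fin N) → Fin (d n)) × ((n : Fin (N + 1)) → Fin (ρ n))),
          (X z.1 * X z'.1) * ((∏ n, E (pidx z n) ω) * (∏ n, E (pidx z' n) ω)) := by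
    funext ω
    have hs : (∑ i, X i * ∑ a, ∑ b, ttPath d ρ (G ω) i a b)
        = ∑ z : (((n : Fin N) → Fin (d n)) × ((n : Fin (N + 1)) → Fin (ρ n))),
            X z.1 * ∏ n, E (pidx z n) ω := by
      rw [Fintype.sum_prod_type]
      refine Finset.sum_congr rfl fun i _ => ?_
      rw [sum_ttPath, Finset.mul_sum]
    rw [hs, sq, Finset.sum_mul_sum]
    refine Finset.sum_congr rfl fun z _ => Finset.sum_congr rfl fun z' _ => by ring
  rw [hA]
  rw [integral_finset_sum _ (fun z _ => integrable_finset_sum _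
    (fun z' _ => ((key z z').1.const_mul _)))]
  have hintval : ∀ z, ∑ z' : (((n : Fin N) → Fin (d n)) × ((n : Fin (N + 1)) → Fin (ρ n))),
      ∫ ω, (X z.1 * X z'.1) * ((∏ n, E (pidx z n) ω) * (∏ n, E (pidx z' n) ω)) ∂μ
      = X z.1 ^ 2 := by
    intro z
    have : ∀ z', ∫ ω, (X z.1 * X z'.1) * ((∏ n, E (pidx z n) ω) * (∏ n, E (pidx z' n) ω)) ∂μ
        = (X z.1 * X z'.1) * (if z = z' then 1 else 0) := by
      intro z'
      rw [integral_const_mul, (key z z').2]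
      congr 1
      exact if_congr (hpidx_inj z z') rfl rfl
    simp only [this]
    simp [Finset.sum_ite_eq, sq]
  calc ∑ z : (((n : Fin N) → Fin (d n)) × ((n : Fin (N + 1)) → Fin (ρ n))),
        ∫ ω, ∑ z' : (((n : Fin N) → Fin (d n)) × ((n : Fin (N + 1)) → Fin (ρ n))),
          (X z.1 * X z'.1) * ((∏ n, E (pidx z n) ω) * (∏ n, E (pidx z' n) ω)) ∂μ
      = ∑ z : (((n : Fin N) → Fin (d n)) × ((n : Fin (N + 1)) → Fin (ρ n))), X z.1 ^ 2 := by
        refine Finset.sum_congr rfl fun z _ => ?_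
        rw [integral_finset_sum _ (fun z' _ => ((key z z').1.const_mul _))]
        exact hintval z
    _ = (R : ℝ) ^ (N - 1) * ∑ i, (X i) ^ 2 := by
        rw [Fintype.sum_prod_type]
        have hcardρ : Fintype.card ((n : Fin (N + 1)) → Fin (ρ n)) = R ^ (N - 1) := by
          rw [Fintype.card_pi]
          simp only [Fintype.card_fin]
          have hprod : ∏ n : Fin (N + 1), ρ n
              = ∏ n : Fin (N + 1), (if n = 0 ∨ n = Fin.last N then 1 else R) := by
            refine Finset.prod_congr rfl fun n _ => ?_
            by_cases h0 : n = 0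
            · subst h0; simp [hρ0]
            · by_cases hl : n = Fin.last N
              · subst hl; simp [hρlast]
              · simp [h0, hl, hρmid n h0 hl]
          rw [hprod, Finset.prod_ite, Finset.prod_const_one, one_mul, Finset.prod_const]
          congr 1
          have hset : Finset.univ.filter (fun n : Fin (N + 1) => n = 0 ∨ n = Fin.last N)
              = {0, Fin.last N} := by
            ext n; simp
          have hcards := Finset.card_filter_add_card_filter_not
            (s := (Finset.univ : Finset (Fin (N + 1))))
            (p := fun n => n = 0 ∨ n = Fin.last N)
          rw [hset] at hcards
          have h0l : (0 : Fin (N + 1)) ≠ Fin.last N := by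
            rw [Fin.ne_iff_vne]
            simp [Fin.last]
            omega
          rw [Finset.card_pair h0l] at hcards
          simp only [Finset.card_univ, Fintype.card_fin] at hcards
          omega
        dsimp only
        simp only [Finset.sum_const, Finset.card_univ, hcardρ, nsmul_eq_mul, Nat.cast_pow]
        rw [← Finset.mul_sum]

end
end
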